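/- arXiv:2405.11266 — 5 statements merged into one kernel-verified Lean document; each statement's English description precedes it below -/
import Mathlib

section
/- The following are equivalent: (i) S_KKT has a Lipschitz continuous single-valued localization around p̄ for (x̄,λ̄); (ii) T_KKT has a Lipschitz continuous single-valued localization around (ū,v̄) for (x̄,λ̄). -/
open Function Set
open scoped InnerProductSpace

noncomputable section

namespace NEPStability

/-! ## Stability notions for set-valued mappings -/

section SetValued

variable {A B : Type*} [NormedAddCommGroup A] [NormedAddCommGroup B]

/-- The Aubin property of a set-valued mapping `Φ` at `a` for `b`. -/
def HasAubinProperty (Φ : A → Set B) (a : A) (b : B) : Prop :=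
  b ∈ Φ a ∧
  (∃ ε : ℝ, 0 < ε ∧ IsClosed ({q : A × B | q.2 ∈ Φ q.1} ∩ Metric.closedBall (a, b) ε)) ∧
  ∃ κ : ℝ, 0 ≤ κ ∧ ∃ U : Set A, ∃ V : Set B,
    IsOpen U ∧ IsOpen V ∧ a ∈ U ∧ b ∈ V ∧
    ∀ a₁ ∈ U, ∀ a₂ ∈ U, ∀ z ∈ Φ a₂ ∩ V, ∃ z' ∈ Φ a₁, ‖z - z'‖ ≤ κ * ‖a₂ - a₁‖

/-- `Φ` has a Lipschitz continuous single-valued localization around `a` for `b`. -/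
def HasLipschitzLocalization (Φ : A → Set B) (a : A) (b : B) : Prop :=
  b ∈ Φ a ∧
  ∃ U : Set A, ∃ V : Set B, IsOpen U ∧ IsOpen V ∧ a ∈ U ∧ b ∈ V ∧
    ∃ σ : A → B, (∃ K : NNReal, LipschitzOnWith K σ U) ∧ (∀ q ∈ U, σ q ∈ V) ∧
      ∀ q ∈ U, ∀ z ∈ V, (z ∈ Φ q ↔ z = σ q)

/-- `Φ` is isolated calm at `a` for `b`. -/
def IsolatedCalmAt (Φ : A → Set B) (a : A) (b : B) : Prop :=
  b ∈ Φ a ∧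
  ∃ κ : ℝ, 0 ≤ κ ∧ ∃ U : Set A, ∃ V : Set B,
    IsOpen U ∧ IsOpen V ∧ a ∈ U ∧ b ∈ V ∧
    ∀ q ∈ U, ∀ z ∈ Φ q ∩ V, ‖z - b‖ ≤ κ * ‖q - a‖

/-- `Φ` is robust isolated calm at `a` for `b`. -/
def RobustIsolatedCalmAt (Φ : A → Set B) (a : A) (b : B) : Prop :=
  b ∈ Φ a ∧
  ∃ κ : ℝ, 0 ≤ κ ∧ ∃ U : Set A, ∃ V : Set B,
    IsOpen U ∧ IsOpen V ∧ a ∈ U ∧ b ∈ V ∧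
    (∀ q ∈ U, ∀ z ∈ Φ q ∩ V, ‖z - b‖ ≤ κ * ‖q - a‖) ∧
    ∀ q ∈ U, (Φ q ∩ V).Nonempty

end SetValued

section C1

variable {A B : Type*} [NormedAddCommGroup A] [NormedSpace ℝ A]
  [NormedAddCommGroup B] [NormedSpace ℝ B]

/-- `Φ` has a continuously differentiable single-valued localization around `a` for `b`. -/
def HasC1Localization (Φ : A → Set B) (a : A) (b : B) : Prop :=
  b ∈ Φ a ∧
  ∃ U : Set A, ∃ V : Set B, IsOpen U ∧ IsOpen V ∧ a ∈ U ∧ b ∈ V ∧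
    ∃ σ : A → B, ContDiffOn ℝ 1 σ U ∧ (∀ q ∈ U, σ q ∈ V) ∧
      ∀ q ∈ U, ∀ z ∈ V, (z ∈ Φ q ↔ z = σ q)

end C1

/-! ## The Nash equilibrium problem -/

/-- The data of an `N`-player Nash equilibrium problem with canonical perturbations:
player `k` has strategy space `ℝ^{n k}`, `m k` constraints of which the first `s k` are
equalities, and parameter space `ℝ^{d k}`; `f` are the objective functions and `g` the
constraint functions. -/
structure NEPData (N : ℕ) (n m d : Fin N → ℕ) where
  s : Fin N → ℕ
  f : ∀ k : Fin N, (∀ j, EuclideanSpace ℝ (Fin (n j))) → EuclideanSpace ℝ (Fin (d k)) → ℝ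
  g : ∀ k : Fin N, Fin (m k) → EuclideanSpace ℝ (Fin (n k)) → EuclideanSpace ℝ (Fin (d k)) → ℝ

/-- Inner product of two strategy profiles. -/
def pinner {N : ℕ} {n : Fin N → ℕ} (y z : ∀ j, EuclideanSpace ℝ (Fin (n j))) : ℝ :=
  ∑ k, ⟪y k, z k⟫_ℝ

/-- Polar cone of a set of strategy profiles. -/
def polarCone {N : ℕ} {n : Fin N → ℕ} (K : Set (∀ j, EuclideanSpace ℝ (Fin (n j)))) :
    Set (∀ j, EuclideanSpace ℝ (Fin (n j))) :=
  {z | ∀ y ∈ K, pinner z y ≤ 0}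

namespace NEPData

variable {N : ℕ} {n m d : Fin N → ℕ} (P : NEPData N n m d)

/-- The gradient `∇_{x^k} L^k(x,λ^k;w^k)` of player `k`'s Lagrangian with respect to
its own strategy. -/
def gradLag (k : Fin N) (x : ∀ j, EuclideanSpace ℝ (Fin (n j)))
    (lk : EuclideanSpace ℝ (Fin (m k))) (wk : EuclideanSpace ℝ (Fin (d k))) :
    EuclideanSpace ℝ (Fin (n k)) :=
  gradient (fun y : EuclideanSpace ℝ (Fin (n k)) =>
    P.f k (Function.update x k y) wk + ∑ i, lk i * P.g k i y wk) (x k)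

/-- The gradient `∇_{x^k} g^k_i(x^k;w^k)`. -/
def gradg (k : Fin N) (i : Fin (m k)) (xk : EuclideanSpace ℝ (Fin (n k)))
    (wk : EuclideanSpace ℝ (Fin (d k))) : EuclideanSpace ℝ (Fin (n k)) :=
  gradient (fun y => P.g k i y wk) xk

/-- The Hessian block `∇²_{x^k x^i} L^k(x,λ^k;w^k)`, as a continuous linear map from
player `i`'s space to player `k`'s space. -/
def hessLag (k i : Fin N) (x : ∀ j, EuclideanSpace ℝ (Fin (n j)))
    (lk : EuclideanSpace ℝ (Fin (m k))) (wk : EuclideanSpace ℝ (Fin (d k))) :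
    EuclideanSpace ℝ (Fin (n i)) →L[ℝ] EuclideanSpace ℝ (Fin (n k)) :=
  fderiv ℝ (fun y : EuclideanSpace ℝ (Fin (n i)) =>
    P.gradLag k (Function.update x i y) lk wk) (x i)

/-- The KKT solution mapping `S_KKT` of the NEP with canonical perturbations:
`p = (u,v,w)`. -/
def SKKT (p : (∀ k, EuclideanSpace ℝ (Fin (m k))) × (∀ j, EuclideanSpace ℝ (Fin (n j)))
      × (∀ k, EuclideanSpace ℝ (Fin (d k)))) :
    Set ((∀ j, EuclideanSpace ℝ (Fin (n j))) × (∀ k, EuclideanSpace ℝ (Fin (m k)))) :=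
  {xl | ∀ k,
    P.gradLag k xl.1 (xl.2 k) (p.2.2 k) = p.2.1 k ∧
    (∀ i : Fin (m k), (i : ℕ) < P.s k → P.g k i (xl.1 k) (p.2.2 k) = p.1 k i) ∧
    (∀ i : Fin (m k), P.s k ≤ (i : ℕ) →
      0 ≤ xl.2 k i ∧ P.g k i (xl.1 k) (p.2.2 k) ≤ p.1 k i ∧
      xl.2 k i * (P.g k i (xl.1 k) (p.2.2 k) - p.1 k i) = 0)}

/-- The KKT solution mapping `T_KKT` of the NEP with only tilt perturbations, the
parameter `w` being fixed at `wb`. -/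
def TKKT (wb : ∀ k, EuclideanSpace ℝ (Fin (d k)))
    (uv : (∀ k, EuclideanSpace ℝ (Fin (m k))) × (∀ j, EuclideanSpace ℝ (Fin (n j)))) :
    Set ((∀ j, EuclideanSpace ℝ (Fin (n j))) × (∀ k, EuclideanSpace ℝ (Fin (m k)))) :=
  P.SKKT (uv.1, uv.2, wb)

/-- The linearized KKT mapping `L_KKT` at the reference point `(pb, xb, lb)`. -/
def LKKT (pb : (∀ k, EuclideanSpace ℝ (Fin (m k))) × (∀ j, EuclideanSpace ℝ (Fin (n j)))
      × (∀ k, EuclideanSpace ℝ (Fin (d k))))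
    (xb : ∀ j, EuclideanSpace ℝ (Fin (n j))) (lb : ∀ k, EuclideanSpace ℝ (Fin (m k)))
    (uv : (∀ k, EuclideanSpace ℝ (Fin (m k))) × (∀ j, EuclideanSpace ℝ (Fin (n j)))) :
    Set ((∀ j, EuclideanSpace ℝ (Fin (n j))) × (∀ k, EuclideanSpace ℝ (Fin (m k)))) :=
  {xl | ∀ k,
    uv.2 k = P.gradLag k xb (lb k) (pb.2.2 k)
      + ∑ i, P.hessLag k i xb (lb k) (pb.2.2 k) (xl.1 i - xb i)
      + ∑ j, (xl.2 k j - lb k j) • P.gradg k j (xb k) (pb.2.2 k) ∧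
    (∀ i : Fin (m k), (i : ℕ) < P.s k →
      P.g k i (xb k) (pb.2.2 k) + ⟪P.gradg k i (xb k) (pb.2.2 k), xl.1 k - xb k⟫_ℝ
        = uv.1 k i) ∧
    (∀ i : Fin (m k), P.s k ≤ (i : ℕ) →
      0 ≤ xl.2 k i ∧
      P.g k i (xb k) (pb.2.2 k) + ⟪P.gradg k i (xb k) (pb.2.2 k), xl.1 k - xb k⟫_ℝ
        ≤ uv.1 k i ∧
      xl.2 k i * (P.g k i (xb k) (pb.2.2 k)
        + ⟪P.gradg k i (xb k) (pb.2.2 k), xl.1 k - xb k⟫_ℝ - uv.1 k i) = 0)}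

section Reference

variable (pb : (∀ k, EuclideanSpace ℝ (Fin (m k))) × (∀ j, EuclideanSpace ℝ (Fin (n j)))
    × (∀ k, EuclideanSpace ℝ (Fin (d k))))
  (xb : ∀ j, EuclideanSpace ℝ (Fin (n j))) (lb : ∀ k, EuclideanSpace ℝ (Fin (m k)))

/-- The index set `I^k_1` of equality and strongly active inequality constraints. -/
def idx1 (k : Fin N) : Set (Fin (m k)) :=
  {i | (i : ℕ) < P.s k ∨
    (P.s k ≤ (i : ℕ) ∧ 0 < lb k i ∧ P.g k i (xb k) (pb.2.2 k) = pb.1 k i)}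

/-- The index set `I^k_2` of weakly active inequality constraints. -/
def idx2 (k : Fin N) : Set (Fin (m k)) :=
  {i | P.s k ≤ (i : ℕ) ∧ lb k i = 0 ∧ P.g k i (xb k) (pb.2.2 k) = pb.1 k i}

/-- The index set `I^k_3` of inactive inequality constraints. -/
def idx3 (k : Fin N) : Set (Fin (m k)) :=
  {i | P.s k ≤ (i : ℕ) ∧ lb k i = 0 ∧ P.g k i (xb k) (pb.2.2 k) < pb.1 k i}

/-- The linear independence constraint qualification for player `k`. -/
def LICQ (k : Fin N) : Prop :=
  LinearIndependent ℝ
    (fun i : ↥(P.idx1 pb xb lb k ∪ P.idx2 pb xb lb k) => P.gradg k i.1 (xb k) (pb.2.2 k))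

/-- The strict Mangasarian–Fromovitz constraint qualification for player `k`. -/
def SMFCQ (k : Fin N) : Prop :=
  LinearIndependent ℝ (fun i : ↥(P.idx1 pb xb lb k) => P.gradg k i.1 (xb k) (pb.2.2 k)) ∧
  ∃ y : EuclideanSpace ℝ (Fin (n k)),
    (∀ i ∈ P.idx1 pb xb lb k, ⟪P.gradg k i (xb k) (pb.2.2 k), y⟫_ℝ = 0) ∧
    (∀ i ∈ P.idx2 pb xb lb k, ⟪P.gradg k i (xb k) (pb.2.2 k), y⟫_ℝ < 0)

/-- The strict complementary slackness condition for player `k`. -/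
def SCSC (k : Fin N) : Prop := P.idx2 pb xb lb k = ∅

/-- The cone `K(J_1,J_2)` associated with families of index sets `J_1, J_2`. -/
def Kcone (J1 J2 : ∀ k, Set (Fin (m k))) : Set (∀ j, EuclideanSpace ℝ (Fin (n j))) :=
  {y | ∀ k, (∀ i ∈ J1 k, ⟪P.gradg k i (xb k) (pb.2.2 k), y k⟫_ℝ = 0) ∧
            (∀ i ∈ J2 k, ⟪P.gradg k i (xb k) (pb.2.2 k), y k⟫_ℝ ≤ 0)}

/-- Membership in the index partition set `𝓘`. -/
def IsCriticalPartition (J1 J2 J3 : ∀ k, Set (Fin (m k))) : Prop :=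
  ∀ k, J1 k ∪ J2 k ∪ J3 k = Set.univ ∧
    Disjoint (J1 k) (J2 k) ∧ Disjoint (J1 k) (J3 k) ∧ Disjoint (J2 k) (J3 k) ∧
    P.idx1 pb xb lb k ⊆ J1 k ∧ J1 k ⊆ P.idx1 pb xb lb k ∪ P.idx2 pb xb lb k ∧
    P.idx3 pb xb lb k ⊆ J3 k ∧ J3 k ⊆ P.idx2 pb xb lb k ∪ P.idx3 pb xb lb k

/-- The subspace `M^k`, the null space of the gradients of player `k`'s strongly
active constraints. -/
def Mset (k : Fin N) : Set (EuclideanSpace ℝ (Fin (n k))) :=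
  {y | ∀ i ∈ P.idx1 pb xb lb k, ⟪P.gradg k i (xb k) (pb.2.2 k), y⟫_ℝ = 0}

/-- The critical cone of player `k`. -/
def critCone (k : Fin N) : Set (EuclideanSpace ℝ (Fin (n k))) :=
  {y | (∀ i ∈ P.idx1 pb xb lb k, ⟪P.gradg k i (xb k) (pb.2.2 k), y⟫_ℝ = 0) ∧
       (∀ i ∈ P.idx2 pb xb lb k, ⟪P.gradg k i (xb k) (pb.2.2 k), y⟫_ℝ ≤ 0)}

/-- The strong second-order sufficient condition for player `k`. -/
def SSOSC (k : Fin N) : Prop :=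
  ∀ y ∈ P.Mset pb xb lb k, y ≠ 0 → 0 < ⟪y, P.hessLag k k xb (lb k) (pb.2.2 k) y⟫_ℝ

/-- The second-order sufficient condition for player `k`. -/
def SOSC (k : Fin N) : Prop :=
  ∀ y ∈ P.critCone pb xb lb k, y ≠ 0 → 0 < ⟪y, P.hessLag k k xb (lb k) (pb.2.2 k) y⟫_ℝ

/-- The matrix `A_{ki} := ∇²_{x^k x^i}L^k + (∇²_{x^i x^k}L^i)ᵀ`. -/
def Amap (k i : Fin N) :
    EuclideanSpace ℝ (Fin (n i)) →L[ℝ] EuclideanSpace ℝ (Fin (n k)) :=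
  P.hessLag k i xb (lb k) (pb.2.2 k) + (P.hessLag i k xb (lb i) (pb.2.2 i)).adjoint

/-- `B` is a family of basis matrices: `B k` has `n k - |I^k_1|` columns forming a
basis of `M^k`. -/
def IsBasisFamily
    (B : ∀ k, EuclideanSpace ℝ (Fin (n k - (P.idx1 pb xb lb k).ncard)) →L[ℝ]
      EuclideanSpace ℝ (Fin (n k))) : Prop :=
  ∀ k, Function.Injective (B k) ∧ Set.range (B k) = P.Mset pb xb lb k

/-- Condition (α): the coupling condition on the Hessian blocks with parameters `α`
and basis matrices `B`. -/
def CondAlpha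
    (B : ∀ k, EuclideanSpace ℝ (Fin (n k - (P.idx1 pb xb lb k).ncard)) →L[ℝ]
      EuclideanSpace ℝ (Fin (n k)))
    (α : Fin N → Fin N → ℝ) : Prop :=
  ∀ i k : Fin N, i ≠ k → ∀ y ∈ P.Mset pb xb lb k, y ≠ 0 →
    0 < ⟪y, (P.hessLag k k xb (lb k) (pb.2.2 k)
      - (1 / (4 * α i k * α k i)) •
        ((P.Amap pb xb lb i k).adjoint.comp ((B i).comp
          ((Ring.inverse (((B i).adjoint).comp
            ((P.hessLag i i xb (lb i) (pb.2.2 i)).comp (B i)))).comp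
            (((B i).adjoint).comp (P.Amap pb xb lb i k)))))) y⟫_ℝ

/-- The I-property on `K(I_1,I_2)`. -/
def IProperty : Prop :=
  ∀ y ∈ P.Kcone pb xb (P.idx1 pb xb lb) (P.idx2 pb xb lb),
    (∀ k, ∑ i, ⟪y k, P.hessLag k i xb (lb k) (pb.2.2 k) (y i)⟫_ℝ = 0) → y = 0

/-- The P-property on `K(I_1,I_2)`. -/
def PProperty : Prop :=
  ∀ y ∈ P.Kcone pb xb (P.idx1 pb xb lb) (P.idx2 pb xb lb), y ≠ 0 →
    ∃ k, 0 < (∑ i ∈ Finset.univ.erase k,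
        ⟪y k, P.hessLag k i xb (lb k) (pb.2.2 k) (y i)⟫_ℝ)
      + (1 / 2) * ⟪y k, P.hessLag k k xb (lb k) (pb.2.2 k) (y k)⟫_ℝ

end Reference

/-- The feasible set of player `k` at the perturbation `(uk, wk)`. -/
def feasSet (k : Fin N) (uk : EuclideanSpace ℝ (Fin (m k)))
    (wk : EuclideanSpace ℝ (Fin (d k))) : Set (EuclideanSpace ℝ (Fin (n k))) :=
  {y | (∀ i : Fin (m k), (i : ℕ) < P.s k → P.g k i y wk = uk i) ∧
       (∀ i : Fin (m k), P.s k ≤ (i : ℕ) → P.g k i y wk ≤ uk i)}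

/-- `x` is a local Nash equilibrium of the NEP at the perturbation `p`. -/
def IsLocalNash (p : (∀ k, EuclideanSpace ℝ (Fin (m k))) × (∀ j, EuclideanSpace ℝ (Fin (n j)))
      × (∀ k, EuclideanSpace ℝ (Fin (d k))))
    (x : ∀ j, EuclideanSpace ℝ (Fin (n j))) : Prop :=
  ∀ k, x k ∈ P.feasSet k (p.1 k) (p.2.2 k) ∧
    ∃ ε : ℝ, 0 < ε ∧ ∀ y ∈ P.feasSet k (p.1 k) (p.2.2 k), ‖y - x k‖ < ε →
      P.f k x (p.2.2 k) - ⟪p.2.1 k, x k⟫_ℝ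
        ≤ P.f k (Function.update x k y) (p.2.2 k) - ⟪p.2.1 k, y⟫_ℝ

/-- `x` is a (global) Nash equilibrium of the NEP at the perturbation `p`. -/
def IsNash (p : (∀ k, EuclideanSpace ℝ (Fin (m k))) × (∀ j, EuclideanSpace ℝ (Fin (n j)))
      × (∀ k, EuclideanSpace ℝ (Fin (d k))))
    (x : ∀ j, EuclideanSpace ℝ (Fin (n j))) : Prop :=
  ∀ k, x k ∈ P.feasSet k (p.1 k) (p.2.2 k) ∧
    ∀ y ∈ P.feasSet k (p.1 k) (p.2.2 k),
      P.f k x (p.2.2 k) - ⟪p.2.1 k, x k⟫_ℝ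
        ≤ P.f k (Function.update x k y) (p.2.2 k) - ⟪p.2.1 k, y⟫_ℝ

/-- The convex assumptions on the NEP. -/
def ConvexAssumptions : Prop :=
  (∀ (k : Fin N) (x : ∀ j, EuclideanSpace ℝ (Fin (n j))) (w : EuclideanSpace ℝ (Fin (d k))),
    ConvexOn ℝ Set.univ (fun y : EuclideanSpace ℝ (Fin (n k)) =>
      P.f k (Function.update x k y) w)) ∧
  (∀ (k : Fin N) (i : Fin (m k)), (i : ℕ) < P.s k →
    ∀ w : EuclideanSpace ℝ (Fin (d k)),
      ∃ (l : EuclideanSpace ℝ (Fin (n k)) →L[ℝ] ℝ) (c : ℝ), ∀ y, P.g k i y w = l y + c) ∧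
  (∀ (k : Fin N) (i : Fin (m k)), P.s k ≤ (i : ℕ) →
    ∀ w : EuclideanSpace ℝ (Fin (d k)),
      ConvexOn ℝ Set.univ (fun y : EuclideanSpace ℝ (Fin (n k)) => P.g k i y w))

/-- Smoothness of the data: each `f^k` is `C²` jointly in `(x,w^k)` and each `g^k_i`
is `C²` jointly in `(x^k,w^k)`. -/
def IsC2Data : Prop :=
  (∀ k : Fin N, ContDiff ℝ 2 (fun q : (∀ j, EuclideanSpace ℝ (Fin (n j)))
      × EuclideanSpace ℝ (Fin (d k)) => P.f k q.1 q.2)) ∧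
  (∀ (k : Fin N) (i : Fin (m k)), ContDiff ℝ 2 (fun q : EuclideanSpace ℝ (Fin (n k))
      × EuclideanSpace ℝ (Fin (d k)) => P.g k i q.1 q.2))

end NEPData

end NEPStability

open NEPStability

namespace NEPStability

set_option maxHeartbeats 1000000 in
theorem transfer_localization {Z P Q : Type*}
    [NormedAddCommGroup Z] [NormedSpace ℝ Z] [CompleteSpace Z]
    [NormedAddCommGroup P] [NormedSpace ℝ P]
    [NormedAddCommGroup Q] [NormedSpace ℝ Q]
    (S : P → Set Z) (T : Q → Set Z) (F : Z × P → Q) (p0 : P) (z0 : Z)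
    (hF : ContDiff ℝ 1 F)
    (h0 : (fderiv ℝ F (z0, p0)).comp (ContinuousLinearMap.inl ℝ Z P) = 0)
    (hiff : ∀ z p, z ∈ S p ↔ z ∈ T (F (z, p)))
    (hz : z0 ∈ S p0)
    (hT : HasLipschitzLocalization T (F (z0, p0)) z0) :
    HasLipschitzLocalization S p0 z0 := by
  classical
  obtain ⟨hzT, U₀, V₀, hUo, hVo, hqU, hzV, σ₀, ⟨K, hσ⟩, hσV, hgr⟩ := hT
  have hσq0 : σ₀ (F (z0, p0)) = z0 := ((hgr _ hqU z0 hzV).mp hzT).symm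
  obtain ⟨Kr, hKrdef⟩ : ∃ x : ℝ, x = (K : ℝ) := ⟨_, rfl⟩
  have hKr : 0 ≤ Kr := by rw [hKrdef]; exact K.2
  obtain ⟨ε, hεdef⟩ : ∃ x : ℝ, x = (2 * (Kr + 1))⁻¹ := ⟨_, rfl⟩
  have hε : 0 < ε := by rw [hεdef]; positivity
  have hKε : Kr * ε ≤ 1 / 2 := by
    rw [hεdef, ← div_eq_mul_inv, div_le_div_iff₀ (by positivity) (by norm_num)]
    nlinarith
  -- differentiability facts
  have hFdiff : Differentiable ℝ F := hF.differentiable one_ne_zero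
  have hDFcont : Continuous (fderiv ℝ F) := hF.continuous_fderiv one_ne_zero
  obtain ⟨δ, hδpos, hδ⟩ := Metric.continuousAt_iff.mp hDFcont.continuousAt ε hε
  obtain ⟨C, hCdef⟩ : ∃ x : ℝ, x = ‖fderiv ℝ F (z0, p0)‖ + ε := ⟨_, rfl⟩
  have hC : 0 < C := by rw [hCdef]; positivity
  -- norm of composition with inl
  have hinl : ∀ (L : Z × P →L[ℝ] Q) (x : Z), ‖L.comp (ContinuousLinearMap.inl ℝ Z P) x‖ ≤ ‖L‖ * ‖x‖ := by
    intro L x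
    calc ‖L ((x, 0))‖ ≤ ‖L‖ * ‖((x, 0) : Z × P)‖ := L.le_opNorm _
      _ = ‖L‖ * ‖x‖ := by
          rw [show ‖((x, 0) : Z × P)‖ = ‖x‖ by
            rw [Prod.norm_def]; simp [max_eq_left (norm_nonneg x)]]
  -- the partial derivative in z
  have hA : ∀ (z : Z) (p : P), HasFDerivAt (fun z' => F (z', p))
      ((fderiv ℝ F (z, p)).comp (ContinuousLinearMap.inl ℝ Z P)) z := by
    intro z p
    exact (hFdiff (z, p)).hasFDerivAt.comp z (hasFDerivAt_prodMk_left z p)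
  have hAnorm : ∀ (z : Z) (p : P), dist (z, p) (z0, p0) < δ →
      ‖(fderiv ℝ F (z, p)).comp (ContinuousLinearMap.inl ℝ Z P)‖ ≤ ε := by
    intro z p hzp
    have hd := hδ hzp
    rw [dist_eq_norm] at hd
    refine ContinuousLinearMap.opNorm_le_bound _ hε.le fun x => ?_
    have h1 : (fderiv ℝ F (z, p)).comp (ContinuousLinearMap.inl ℝ Z P) x
        = ((fderiv ℝ F (z, p)) - (fderiv ℝ F (z0, p0))).comp (ContinuousLinearMap.inl ℝ Z P) x := by
      rw [ContinuousLinearMap.sub_comp, h0, ContinuousLinearMap.sub_apply,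
        ContinuousLinearMap.zero_apply, sub_zero]
    rw [h1]
    calc _ ≤ ‖(fderiv ℝ F (z, p)) - (fderiv ℝ F (z0, p0))‖ * ‖x‖ := hinl _ x
      _ ≤ ε * ‖x‖ := mul_le_mul_of_nonneg_right hd.le (norm_nonneg _)
  -- slice Lipschitz estimate
  have hFz : ∀ p ∈ Metric.ball p0 δ, ∀ z1 ∈ Metric.ball z0 δ, ∀ z2 ∈ Metric.ball z0 δ,
      ‖F (z1, p) - F (z2, p)‖ ≤ ε * ‖z1 - z2‖ := by
    intro p hp z1 hz1 z2 hz2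
    refine Convex.norm_image_sub_le_of_norm_hasFDerivWithin_le
      (f := fun z' => F (z', p))
      (f' := fun z => (fderiv ℝ F (z, p)).comp (ContinuousLinearMap.inl ℝ Z P))
      (fun x hx => (hA x p).hasFDerivWithinAt) (fun x hx => ?_) (convex_ball z0 δ) hz2 hz1
    apply hAnorm
    rw [Prod.dist_eq]
    exact max_lt (Metric.mem_ball.mp hx) (Metric.mem_ball.mp hp)
  -- joint Lipschitz estimate
  have hFlip : ∀ q1 ∈ Metric.ball (z0, p0) δ, ∀ q2 ∈ Metric.ball (z0, p0) δ,
      ‖F q1 - F q2‖ ≤ C * ‖q1 - q2‖ := by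
    intro q1 hq1 q2 hq2
    refine Convex.norm_image_sub_le_of_norm_hasFDerivWithin_le
      (f' := fun q => fderiv ℝ F q)
      (fun x hx => (hFdiff x).hasFDerivAt.hasFDerivWithinAt) (fun x hx => ?_)
      (convex_ball _ δ) hq2 hq1
    have hd := hδ (Metric.mem_ball.mp hx)
    rw [dist_eq_norm] at hd
    calc ‖fderiv ℝ F x‖ = ‖fderiv ℝ F (z0, p0) + (fderiv ℝ F x - fderiv ℝ F (z0, p0))‖ := by
          rw [add_sub_cancel]
      _ ≤ ‖fderiv ℝ F (z0, p0)‖ + ‖fderiv ℝ F x - fderiv ℝ F (z0, p0)‖ := norm_add_le _ _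
      _ ≤ C := by rw [hCdef]; linarith
  -- choose radii
  obtain ⟨δ₁, hδ₁pos, hδ₁⟩ := Metric.isOpen_iff.mp hVo z0 hzV
  obtain ⟨δ₂, hδ₂pos, hδ₂⟩ := Metric.isOpen_iff.mp hUo _ hqU
  obtain ⟨r, hrdef⟩ : ∃ x : ℝ, x = min (min (δ / 2) (δ₁ / 2)) (δ₂ / (2 * (C + 1))) := ⟨_, rfl⟩
  have hr : 0 < r := by
    rw [hrdef]
    apply lt_min (lt_min (by linarith) (by linarith))
    positivity
  have hrδ : r < δ := by
    rw [hrdef]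
    exact lt_of_le_of_lt ((min_le_left _ _).trans (min_le_left _ _)) (by linarith)
  have hrV : Metric.closedBall z0 r ⊆ V₀ := by
    refine subset_trans ?_ hδ₁
    intro x hx
    have h1 : r ≤ δ₁ / 2 := by rw [hrdef]; exact (min_le_left _ _).trans (min_le_right _ _)
    exact Metric.mem_ball.mpr (lt_of_le_of_lt (Metric.mem_closedBall.mp hx) (by linarith))
  have hCr : C * r < δ₂ := by
    have hrle : r ≤ δ₂ / (2 * (C + 1)) := by rw [hrdef]; exact min_le_right _ _
    have h1 : C * r ≤ C * (δ₂ / (2 * (C + 1))) := mul_le_mul_of_nonneg_left hrle hC.le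
    have h2 : C * (δ₂ / (2 * (C + 1))) < δ₂ := by
      rw [mul_div_assoc', div_lt_iff₀ (by positivity)]
      nlinarith
    linarith
  obtain ⟨ρ, hρdef⟩ : ∃ x : ℝ, x = r / (4 * (Kr * C + 1)) := ⟨_, rfl⟩
  have hρpos : 0 < ρ := by rw [hρdef]; positivity
  have hρr : ρ ≤ r := by
    rw [hρdef]
    apply div_le_self hr.le
    nlinarith
  have hKCρ : Kr * C * ρ ≤ r / 4 := by
    rw [hρdef, ← mul_div_assoc, div_le_div_iff₀ (by positivity) (by norm_num)]
    nlinarith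
  -- region facts
  have hmemδ : ∀ z ∈ Metric.closedBall z0 r, ∀ p ∈ Metric.ball p0 ρ,
      (z, p) ∈ Metric.ball (z0, p0) δ := by
    intro z hzr p hp
    rw [Metric.mem_ball, Prod.dist_eq]
    exact max_lt (lt_of_le_of_lt (Metric.mem_closedBall.mp hzr) hrδ)
      (lt_of_lt_of_le (Metric.mem_ball.mp hp) (hρr.trans hrδ.le))
  have hFU₀ : ∀ z ∈ Metric.closedBall z0 r, ∀ p ∈ Metric.ball p0 ρ, F (z, p) ∈ U₀ := by
    intro z hzr p hp
    apply hδ₂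
    rw [Metric.mem_ball, dist_eq_norm]
    have h1 : ‖F (z, p) - F (z0, p0)‖ ≤ C * ‖((z, p) : Z × P) - (z0, p0)‖ :=
      hFlip _ (hmemδ z hzr p hp) _ (Metric.mem_ball_self hδpos)
    have h2 : ‖((z, p) : Z × P) - (z0, p0)‖ ≤ r := by
      rw [Prod.norm_def]
      refine max_le ?_ ?_
      · show ‖z - z0‖ ≤ r
        rw [← dist_eq_norm]; exact Metric.mem_closedBall.mp hzr
      · show ‖p - p0‖ ≤ r
        rw [← dist_eq_norm]
        exact le_trans (Metric.mem_ball.mp hp).le hρr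
    calc ‖F (z, p) - F (z0, p0)‖ ≤ C * r := le_trans h1 (mul_le_mul_of_nonneg_left h2 hC.le)
      _ < δ₂ := hCr
  -- distance estimate for the p-direction
  have hFp : ∀ z ∈ Metric.closedBall z0 r, ∀ p ∈ Metric.ball p0 ρ, ∀ p' ∈ Metric.ball p0 ρ,
      dist (F (z, p)) (F (z, p')) ≤ C * dist p p' := by
    intro z hzr p hp p' hp'
    rw [dist_eq_norm, dist_eq_norm]
    have h1 := hFlip (z, p) (hmemδ z hzr p hp) (z, p') (hmemδ z hzr p' hp')
    refine le_trans h1 ?_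
    apply mul_le_mul_of_nonneg_left _ hC.le
    have h2 : ((z, p) : Z × P) - (z, p') = (0, p - p') := by
      rw [Prod.mk_sub_mk, sub_self]
    rw [h2, Prod.norm_def]
    simp [max_eq_right (norm_nonneg (p - p'))]
  -- distance estimate in the z-direction
  have hFzd : ∀ p ∈ Metric.ball p0 ρ, ∀ z1 ∈ Metric.closedBall z0 r, ∀ z2 ∈ Metric.closedBall z0 r,
      dist (F (z1, p)) (F (z2, p)) ≤ ε * dist z1 z2 := by
    intro p hp z1 h1 z2 h2
    rw [dist_eq_norm, dist_eq_norm]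
    refine hFz p (Metric.mem_ball.mpr (lt_of_lt_of_le (Metric.mem_ball.mp hp) (hρr.trans hrδ.le)))
      z1 (Metric.mem_ball.mpr (lt_of_le_of_lt (Metric.mem_closedBall.mp h1) hrδ))
      z2 (Metric.mem_ball.mpr (lt_of_le_of_lt (Metric.mem_closedBall.mp h2) hrδ))
  -- the self-map estimate
  have hself : ∀ p ∈ Metric.ball p0 ρ, ∀ z ∈ Metric.closedBall z0 r,
      dist (σ₀ (F (z, p))) z0 ≤ 3 / 4 * r := by
    intro p hp z hzr
    have hmem1 : F (z, p) ∈ U₀ := hFU₀ z hzr p hp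
    have h1 : dist (σ₀ (F (z, p))) z0 ≤ Kr * dist (F (z, p)) (F (z0, p0)) := by
      have h1' := hσ.dist_le_mul _ hmem1 _ hqU
      rw [hσq0] at h1'
      rw [hKrdef]
      exact h1'
    have h2 : dist (F (z, p)) (F (z0, p0)) ≤ ε * r + C * ρ := by
      have h3 := hFzd p hp z hzr z0 (Metric.mem_closedBall_self hr.le)
      have h4 := hFp z0 (Metric.mem_closedBall_self hr.le) p hp p0 (Metric.mem_ball_self hρpos)
      have h5 : dist z z0 ≤ r := Metric.mem_closedBall.mp hzr
      have h6 : dist p p0 ≤ ρ := (Metric.mem_ball.mp hp).le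
      calc dist (F (z, p)) (F (z0, p0))
          ≤ dist (F (z, p)) (F (z0, p)) + dist (F (z0, p)) (F (z0, p0)) := dist_triangle _ _ _
        _ ≤ ε * r + C * ρ := by
            have := mul_le_mul_of_nonneg_left h5 hε.le
            have := mul_le_mul_of_nonneg_left h6 hC.le
            linarith
    have h7 : Kr * (ε * r + C * ρ) ≤ 3 / 4 * r := by
      have h8 : Kr * ε * r ≤ 1 / 2 * r := mul_le_mul_of_nonneg_right hKε hr.le
      nlinarith
    calc dist (σ₀ (F (z, p))) z0 ≤ Kr * dist (F (z, p)) (F (z0, p0)) := h1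
      _ ≤ Kr * (ε * r + C * ρ) := mul_le_mul_of_nonneg_left h2 hKr
      _ ≤ 3 / 4 * r := h7
  -- the contraction estimate
  have hcontr : ∀ p ∈ Metric.ball p0 ρ, ∀ z1 ∈ Metric.closedBall z0 r, ∀ z2 ∈ Metric.closedBall z0 r,
      dist (σ₀ (F (z1, p))) (σ₀ (F (z2, p))) ≤ 1 / 2 * dist z1 z2 := by
    intro p hp z1 h1 z2 h2
    have hσd : dist (σ₀ (F (z1, p))) (σ₀ (F (z2, p))) ≤ Kr * dist (F (z1, p)) (F (z2, p)) := by
      rw [hKrdef]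
      exact hσ.dist_le_mul _ (hFU₀ z1 h1 p hp) _ (hFU₀ z2 h2 p hp)
    have hεd := hFzd p hp z1 h1 z2 h2
    have h3 : Kr * dist (F (z1, p)) (F (z2, p)) ≤ Kr * (ε * dist z1 z2) :=
      mul_le_mul_of_nonneg_left hεd hKr
    have h4 : Kr * ε * dist z1 z2 ≤ 1 / 2 * dist z1 z2 :=
      mul_le_mul_of_nonneg_right hKε dist_nonneg
    calc dist (σ₀ (F (z1, p))) (σ₀ (F (z2, p))) ≤ Kr * dist (F (z1, p)) (F (z2, p)) := hσd
      _ ≤ Kr * (ε * dist z1 z2) := h3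
      _ = Kr * ε * dist z1 z2 := (mul_assoc _ _ _).symm
      _ ≤ 1 / 2 * dist z1 z2 := h4
  -- existence of fixed points
  have hex : ∀ p ∈ Metric.ball p0 ρ, ∃ z ∈ Metric.closedBall z0 r, σ₀ (F (z, p)) = z := by
    intro p hp
    haveI : Nonempty (Metric.closedBall z0 r) := ⟨⟨z0, Metric.mem_closedBall_self hr.le⟩⟩
    haveI : CompleteSpace (Metric.closedBall z0 r) :=
      (Metric.isClosed_closedBall (x := z0) (ε := r)).completeSpace_coe
    set Tm : Metric.closedBall z0 r → Metric.closedBall z0 r := fun z =>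
      ⟨σ₀ (F (z.1, p)), Metric.mem_closedBall.mpr
        (le_trans (hself p hp z.1 z.2) (by linarith))⟩ with hTm
    have hcw : ContractingWith (1/2 : NNReal) Tm := by
      constructor
      · rw [← NNReal.coe_lt_coe]
        norm_num
      · apply LipschitzWith.of_dist_le_mul
        intro x y
        rw [Subtype.dist_eq]
        have := hcontr p hp x.1 x.2 y.1 y.2
        simpa [Subtype.dist_eq, hTm] using this
    obtain ⟨y, hy, -⟩ := hcw.exists_fixedPoint
      ⟨z0, Metric.mem_closedBall_self hr.le⟩ (edist_ne_top _ _)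
    refine ⟨y.1, y.2, ?_⟩
    have := congrArg Subtype.val hy
    exact this
  -- uniqueness of fixed points
  have huniq : ∀ p ∈ Metric.ball p0 ρ, ∀ z1 ∈ Metric.closedBall z0 r, ∀ z2 ∈ Metric.closedBall z0 r,
      σ₀ (F (z1, p)) = z1 → σ₀ (F (z2, p)) = z2 → z1 = z2 := by
    intro p hp z1 h1 z2 h2 e1 e2
    have := hcontr p hp z1 h1 z2 h2
    rw [e1, e2] at this
    have : dist z1 z2 ≤ 0 := by linarith
    exact dist_le_zero.mp this
  -- define the localization function
  choose! φ hφmem hφfix using hex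
  obtain ⟨σ, hσdef⟩ : ∃ σ : P → Z, σ = fun p => if p ∈ Metric.ball p0 ρ then φ p else z0 := ⟨_, rfl⟩
  have hσp : ∀ p ∈ Metric.ball p0 ρ, σ p = φ p := by
    intro p hp; rw [hσdef]; simp [hp]
  have hσmem : ∀ p ∈ Metric.ball p0 ρ, σ p ∈ Metric.closedBall z0 r := by
    intro p hp; rw [hσp p hp]; exact hφmem p hp
  have hσfix : ∀ p ∈ Metric.ball p0 ρ, σ₀ (F (σ p, p)) = σ p := by
    intro p hp; rw [hσp p hp]; exact hφfix p hp
  have hσball : ∀ p ∈ Metric.ball p0 ρ, σ p ∈ Metric.ball z0 r := by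
    intro p hp
    rw [Metric.mem_ball, ← hσfix p hp]
    exact lt_of_le_of_lt (hself p hp _ (hσmem p hp)) (by linarith)
  -- Lipschitz estimate for σ
  have hσlip : ∀ p ∈ Metric.ball p0 ρ, ∀ p' ∈ Metric.ball p0 ρ,
      dist (σ p) (σ p') ≤ 2 * Kr * C * dist p p' := by
    intro p hp p' hp'
    have e1 : σ₀ (F (σ p, p)) = σ p := hσfix p hp
    have e2 : σ₀ (F (σ p', p')) = σ p' := hσfix p' hp'
    have hm1 : σ p ∈ Metric.closedBall z0 r := hσmem p hp
    have hm2 : σ p' ∈ Metric.closedBall z0 r := hσmem p' hp'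
    have h1 : dist (σ p) (σ p') ≤ Kr * dist (F (σ p, p)) (F (σ p', p')) := by
      have h1' := hσ.dist_le_mul _ (hFU₀ _ hm1 p hp) _ (hFU₀ _ hm2 p' hp')
      rw [e1, e2] at h1'
      rw [hKrdef]
      exact h1'
    have h2 : dist (F (σ p, p)) (F (σ p', p')) ≤ ε * dist (σ p) (σ p') + C * dist p p' := by
      calc dist (F (σ p, p)) (F (σ p', p'))
          ≤ dist (F (σ p, p)) (F (σ p', p)) + dist (F (σ p', p)) (F (σ p', p')) :=
            dist_triangle _ _ _
        _ ≤ ε * dist (σ p) (σ p') + C * dist p p' := by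
            have := hFzd p hp (σ p) hm1 (σ p') hm2
            have := hFp (σ p') hm2 p hp p' hp'
            linarith
    have h3 : dist (σ p) (σ p') ≤ Kr * ε * dist (σ p) (σ p') + Kr * C * dist p p' := by
      calc dist (σ p) (σ p') ≤ Kr * (ε * dist (σ p) (σ p') + C * dist p p') :=
            le_trans h1 (mul_le_mul_of_nonneg_left h2 hKr)
        _ = Kr * ε * dist (σ p) (σ p') + Kr * C * dist p p' := by ring
    have h4 : Kr * ε * dist (σ p) (σ p') ≤ 1 / 2 * dist (σ p) (σ p') :=
      mul_le_mul_of_nonneg_right hKε dist_nonneg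
    nlinarith [dist_nonneg (x := σ p) (y := σ p'), dist_nonneg (x := p) (y := p'),
      mul_nonneg (mul_nonneg hKr hC.le) (dist_nonneg (x := p) (y := p'))]
  -- assemble
  refine ⟨hz, Metric.ball p0 ρ, Metric.ball z0 r, Metric.isOpen_ball, Metric.isOpen_ball,
    Metric.mem_ball_self hρpos, Metric.mem_ball_self hr, σ, ⟨(2 * Kr * C).toNNReal, ?_⟩,
    hσball, ?_⟩
  · apply LipschitzOnWith.of_dist_le_mul
    intro x hx y hy
    rw [Real.coe_toNNReal _ (by positivity)]
    exact hσlip x hx y hy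
  · intro p hp z hzb
    constructor
    · intro hzS
      have hzT' : z ∈ T (F (z, p)) := (hiff z p).mp hzS
      have hzcb : z ∈ Metric.closedBall z0 r := Metric.ball_subset_closedBall hzb
      have hFU : F (z, p) ∈ U₀ := hFU₀ z hzcb p hp
      have hzV₀ : z ∈ V₀ := hrV hzcb
      have : z = σ₀ (F (z, p)) := (hgr _ hFU z hzV₀).mp hzT'
      exact huniq p hp z hzcb (σ p) (hσmem p hp) this.symm (hσfix p hp)
    · intro hzeq
      subst hzeq
      have hm : σ p ∈ Metric.closedBall z0 r := hσmem p hp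
      have hFU : F (σ p, p) ∈ U₀ := hFU₀ _ hm p hp
      have hσV₀ : σ p ∈ V₀ := hrV hm
      have : σ p ∈ T (F (σ p, p)) := (hgr _ hFU (σ p) hσV₀).mpr (hσfix p hp).symm
      exact (hiff (σ p) p).mpr this

end NEPStability

namespace NEPStability
namespace NEPData
variable {N : ℕ} {n m d : Fin N → ℕ} (P : NEPData N n m d)

lemma contDiff_update_aux (k : Fin N) :
    ContDiff ℝ 2 (fun q : (∀ j, EuclideanSpace ℝ (Fin (n j))) × EuclideanSpace ℝ (Fin (n k)) =>
      Function.update q.1 k q.2) := by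
  have h : (fun q : (∀ j, EuclideanSpace ℝ (Fin (n j))) × EuclideanSpace ℝ (Fin (n k)) =>
      Function.update q.1 k q.2)
      = fun q => q.1 + (Pi.single (M := fun j => EuclideanSpace ℝ (Fin (n j))) k (q.2 - q.1 k)) := by
    funext q j
    by_cases h : j = k
    · subst h; simp
    · simp [Function.update_of_ne h, Pi.single_eq_of_ne h]
  rw [h]
  exact contDiff_fst.add ((contDiff_single (fun j => EuclideanSpace ℝ (Fin (n j))) (2 : WithTop ℕ∞) k).comp
    (contDiff_snd.sub ((contDiff_pi.mp contDiff_id k).comp contDiff_fst)))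

lemma contDiff_gradLagAux (hC2 : P.IsC2Data) (k : Fin N) :
    ContDiff ℝ 1 (fun a : (∀ j, EuclideanSpace ℝ (Fin (n j)))
        × EuclideanSpace ℝ (Fin (m k)) × EuclideanSpace ℝ (Fin (d k)) =>
      P.gradLag k a.1 a.2.1 a.2.2) := by
  have hΦ : ContDiff ℝ 2 (Function.uncurry
      (fun (a : (∀ j, EuclideanSpace ℝ (Fin (n j)))
          × EuclideanSpace ℝ (Fin (m k)) × EuclideanSpace ℝ (Fin (d k)))
        (y : EuclideanSpace ℝ (Fin (n k))) =>
      P.f k (Function.update a.1 k y) a.2.2 + ∑ i, a.2.1 i * P.g k i y a.2.2)) := by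
    have h1 : ContDiff ℝ 2 (fun q : ((∀ j, EuclideanSpace ℝ (Fin (n j)))
          × EuclideanSpace ℝ (Fin (m k)) × EuclideanSpace ℝ (Fin (d k)))
          × EuclideanSpace ℝ (Fin (n k)) =>
        P.f k (Function.update q.1.1 k q.2) q.1.2.2) :=
      (hC2.1 k).comp (((contDiff_update_aux (n := n) k).comp
        ((contDiff_fst.comp contDiff_fst).prodMk contDiff_snd)).prodMk
        (contDiff_snd.comp (contDiff_snd.comp contDiff_fst)))
    have h2 : ContDiff ℝ 2 (fun q : ((∀ j, EuclideanSpace ℝ (Fin (n j)))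
          × EuclideanSpace ℝ (Fin (m k)) × EuclideanSpace ℝ (Fin (d k)))
          × EuclideanSpace ℝ (Fin (n k)) =>
        ∑ i, q.1.2.1 i * P.g k i q.2 q.1.2.2) := by
      have hlam : ContDiff ℝ 2 (fun q : ((∀ j, EuclideanSpace ℝ (Fin (n j)))
          × EuclideanSpace ℝ (Fin (m k)) × EuclideanSpace ℝ (Fin (d k)))
          × EuclideanSpace ℝ (Fin (n k)) => q.1.2.1) :=
        contDiff_fst.comp (contDiff_snd.comp contDiff_fst)
      refine ContDiff.sum fun i _ => ?_
      have hli : ContDiff ℝ 2 (fun q : ((∀ j, EuclideanSpace ℝ (Fin (n j)))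
          × EuclideanSpace ℝ (Fin (m k)) × EuclideanSpace ℝ (Fin (d k)))
          × EuclideanSpace ℝ (Fin (n k)) => q.1.2.1 i) :=
        (EuclideanSpace.proj (𝕜 := ℝ) (i : Fin (m k))).contDiff.comp hlam
      have hgi : ContDiff ℝ 2 (fun q : ((∀ j, EuclideanSpace ℝ (Fin (n j)))
          × EuclideanSpace ℝ (Fin (m k)) × EuclideanSpace ℝ (Fin (d k)))
          × EuclideanSpace ℝ (Fin (n k)) => P.g k i q.2 q.1.2.2) :=
        (hC2.2 k i).comp (contDiff_snd.prodMk (contDiff_snd.comp (contDiff_snd.comp contDiff_fst)))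
      exact hli.mul hgi
    exact h1.add h2
  have hg : ContDiff ℝ 1 (fun a : (∀ j, EuclideanSpace ℝ (Fin (n j)))
      × EuclideanSpace ℝ (Fin (m k)) × EuclideanSpace ℝ (Fin (d k)) => a.1 k) :=
    (contDiff_pi.mp contDiff_id k).comp contDiff_fst
  have hfd := ContDiff.fderiv (f := fun (a : (∀ j, EuclideanSpace ℝ (Fin (n j)))
      × EuclideanSpace ℝ (Fin (m k)) × EuclideanSpace ℝ (Fin (d k)))
      (y : EuclideanSpace ℝ (Fin (n k))) =>
      P.f k (Function.update a.1 k y) a.2.2 + ∑ i, a.2.1 i * P.g k i y a.2.2)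
      (g := fun a => a.1 k) hΦ hg (by norm_num)
  exact ((InnerProductSpace.toDual ℝ (EuclideanSpace ℝ (Fin (n k)))).symm.contDiff).comp hfd


/-- The substitution map reducing full perturbations to tilt perturbations. -/
def auxF (wb : ∀ k, EuclideanSpace ℝ (Fin (d k)))
    (q : ((∀ j, EuclideanSpace ℝ (Fin (n j))) × (∀ k, EuclideanSpace ℝ (Fin (m k))))
      × (∀ k, EuclideanSpace ℝ (Fin (m k))) × (∀ j, EuclideanSpace ℝ (Fin (n j)))
      × (∀ k, EuclideanSpace ℝ (Fin (d k)))) :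
    (∀ k, EuclideanSpace ℝ (Fin (m k))) × (∀ j, EuclideanSpace ℝ (Fin (n j))) :=
  (fun k => (WithLp.toLp 2 (fun i => q.2.1 k i - P.g k i (q.1.1 k) (q.2.2.2 k) + P.g k i (q.1.1 k) (wb k)) :
      EuclideanSpace ℝ (Fin (m k))),
   fun k => q.2.2.1 k - P.gradLag k q.1.1 (q.1.2 k) (q.2.2.2 k)
      + P.gradLag k q.1.1 (q.1.2 k) (wb k))

lemma auxF_eq_of_wb (wb : ∀ k, EuclideanSpace ℝ (Fin (d k)))
    (z : (∀ j, EuclideanSpace ℝ (Fin (n j))) × (∀ k, EuclideanSpace ℝ (Fin (m k))))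
    (u : ∀ k, EuclideanSpace ℝ (Fin (m k))) (v : ∀ j, EuclideanSpace ℝ (Fin (n j))) :
    P.auxF wb (z, (u, v, wb)) = (u, v) := by
  unfold auxF
  refine Prod.ext ?_ ?_
  · funext k
    ext i
    simp
  · funext k
    simp

lemma mem_SKKT_iff_auxF (wb : ∀ k, EuclideanSpace ℝ (Fin (d k)))
    (z : (∀ j, EuclideanSpace ℝ (Fin (n j))) × (∀ k, EuclideanSpace ℝ (Fin (m k))))
    (p : (∀ k, EuclideanSpace ℝ (Fin (m k))) × (∀ j, EuclideanSpace ℝ (Fin (n j)))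
      × (∀ k, EuclideanSpace ℝ (Fin (d k)))) :
    z ∈ P.SKKT p ↔ z ∈ P.TKKT wb (P.auxF wb (z, p)) := by
  simp only [SKKT, TKKT, auxF, Set.mem_setOf_eq, WithLp.ofLp_toLp]
  constructor
  · intro h k
    obtain ⟨h1, h2, h3⟩ := h k
    refine ⟨?_, ?_, ?_⟩
    · rw [h1, sub_self, zero_add]
    · intro i hi
      rw [h2 i hi]
      ring
    · intro i hi
      obtain ⟨ha, hb, hc⟩ := h3 i hi
      refine ⟨ha, by linarith, ?_⟩
      have : P.g k i (z.1 k) (wb k) -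
          (p.1 k i - P.g k i (z.1 k) (p.2.2 k) + P.g k i (z.1 k) (wb k))
          = P.g k i (z.1 k) (p.2.2 k) - p.1 k i := by ring
      rw [this, hc]
  · intro h k
    obtain ⟨h1, h2, h3⟩ := h k
    refine ⟨?_, ?_, ?_⟩
    · have h2' : (0 : EuclideanSpace ℝ (Fin (n k))) + P.gradLag k z.1 (z.2 k) (wb k)
          = p.2.1 k - P.gradLag k z.1 (z.2 k) (p.2.2 k) + P.gradLag k z.1 (z.2 k) (wb k) := by
        rw [zero_add]; exact h1
      have h3' := add_right_cancel h2'
      have := sub_eq_zero.mp h3'.symm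
      exact this.symm
    · intro i hi
      have := h2 i hi
      linarith
    · intro i hi
      obtain ⟨ha, hb, hc⟩ := h3 i hi
      refine ⟨ha, by linarith, ?_⟩
      have : P.g k i (z.1 k) (p.2.2 k) - p.1 k i = P.g k i (z.1 k) (wb k) -
          (p.1 k i - P.g k i (z.1 k) (p.2.2 k) + P.g k i (z.1 k) (wb k)) := by ring
      rw [this, hc]


lemma contDiff_auxF (hC2 : P.IsC2Data) (wb : ∀ k, EuclideanSpace ℝ (Fin (d k))) :
    ContDiff ℝ 1 (P.auxF wb) := by
  unfold auxF
  apply ContDiff.prodMk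
  · refine (contDiff_pi (F' := fun k => EuclideanSpace ℝ (Fin (m k)))).2 fun k => ?_
    have e := (PiLp.continuousLinearEquiv 2 ℝ (fun _ : Fin (m k) => ℝ)).symm
    have hx : ContDiff ℝ 1 (fun q : ((∀ j, EuclideanSpace ℝ (Fin (n j)))
        × (∀ k, EuclideanSpace ℝ (Fin (m k))))
        × (∀ k, EuclideanSpace ℝ (Fin (m k))) × (∀ j, EuclideanSpace ℝ (Fin (n j)))
        × (∀ k, EuclideanSpace ℝ (Fin (d k))) => q.1.1 k) :=
      (contDiff_pi.mp contDiff_id k).comp (contDiff_fst.comp contDiff_fst)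
    have hw : ContDiff ℝ 1 (fun q : ((∀ j, EuclideanSpace ℝ (Fin (n j)))
        × (∀ k, EuclideanSpace ℝ (Fin (m k))))
        × (∀ k, EuclideanSpace ℝ (Fin (m k))) × (∀ j, EuclideanSpace ℝ (Fin (n j)))
        × (∀ k, EuclideanSpace ℝ (Fin (d k))) => q.2.2.2 k) :=
      (contDiff_pi.mp contDiff_id k).comp
        (contDiff_snd.comp (contDiff_snd.comp contDiff_snd))
    have hcomp : ContDiff ℝ 1 (fun q : ((∀ j, EuclideanSpace ℝ (Fin (n j)))
        × (∀ k, EuclideanSpace ℝ (Fin (m k))))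
        × (∀ k, EuclideanSpace ℝ (Fin (m k))) × (∀ j, EuclideanSpace ℝ (Fin (n j)))
        × (∀ k, EuclideanSpace ℝ (Fin (d k))) =>
        (PiLp.continuousLinearEquiv 2 ℝ (fun _ : Fin (m k) => ℝ)).symm
          (fun i => q.2.1 k i - P.g k i (q.1.1 k) (q.2.2.2 k) + P.g k i (q.1.1 k) (wb k))) := by
      apply (PiLp.continuousLinearEquiv 2 ℝ (fun _ : Fin (m k) => ℝ)).symm.contDiff.comp
      rw [contDiff_pi]
      intro i
      have hu : ContDiff ℝ 1 (fun q : ((∀ j, EuclideanSpace ℝ (Fin (n j)))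
          × (∀ k, EuclideanSpace ℝ (Fin (m k))))
          × (∀ k, EuclideanSpace ℝ (Fin (m k))) × (∀ j, EuclideanSpace ℝ (Fin (n j)))
          × (∀ k, EuclideanSpace ℝ (Fin (d k))) => q.2.1 k i) :=
        (EuclideanSpace.proj (𝕜 := ℝ) (i : Fin (m k))).contDiff.comp
          ((contDiff_pi.mp contDiff_id k).comp (contDiff_fst.comp contDiff_snd))
      exact (hu.sub (((hC2.2 k i).of_le (by norm_num)).comp (hx.prodMk hw))).add
        (((hC2.2 k i).of_le (by norm_num)).comp (hx.prodMk contDiff_const))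
    exact hcomp
  · refine (contDiff_pi (F' := fun j => EuclideanSpace ℝ (Fin (n j)))).2 fun k => ?_
    have hx : ContDiff ℝ 1 (fun q : ((∀ j, EuclideanSpace ℝ (Fin (n j)))
        × (∀ k, EuclideanSpace ℝ (Fin (m k))))
        × (∀ k, EuclideanSpace ℝ (Fin (m k))) × (∀ j, EuclideanSpace ℝ (Fin (n j)))
        × (∀ k, EuclideanSpace ℝ (Fin (d k))) => q.1.1) :=
      contDiff_fst.comp contDiff_fst
    have hl : ContDiff ℝ 1 (fun q : ((∀ j, EuclideanSpace ℝ (Fin (n j)))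
        × (∀ k, EuclideanSpace ℝ (Fin (m k))))
        × (∀ k, EuclideanSpace ℝ (Fin (m k))) × (∀ j, EuclideanSpace ℝ (Fin (n j)))
        × (∀ k, EuclideanSpace ℝ (Fin (d k))) => q.1.2 k) :=
      (contDiff_pi.mp contDiff_id k).comp (contDiff_snd.comp contDiff_fst)
    have hw : ContDiff ℝ 1 (fun q : ((∀ j, EuclideanSpace ℝ (Fin (n j)))
        × (∀ k, EuclideanSpace ℝ (Fin (m k))))
        × (∀ k, EuclideanSpace ℝ (Fin (m k))) × (∀ j, EuclideanSpace ℝ (Fin (n j)))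
        × (∀ k, EuclideanSpace ℝ (Fin (d k))) => q.2.2.2 k) :=
      (contDiff_pi.mp contDiff_id k).comp
        (contDiff_snd.comp (contDiff_snd.comp contDiff_snd))
    have hv : ContDiff ℝ 1 (fun q : ((∀ j, EuclideanSpace ℝ (Fin (n j)))
        × (∀ k, EuclideanSpace ℝ (Fin (m k))))
        × (∀ k, EuclideanSpace ℝ (Fin (m k))) × (∀ j, EuclideanSpace ℝ (Fin (n j)))
        × (∀ k, EuclideanSpace ℝ (Fin (d k))) => q.2.2.1 k) :=
      (contDiff_pi.mp contDiff_id k).comp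
        (contDiff_fst.comp (contDiff_snd.comp contDiff_snd))
    exact (hv.sub ((P.contDiff_gradLagAux hC2 k).comp (hx.prodMk (hl.prodMk hw)))).add
      ((P.contDiff_gradLagAux hC2 k).comp (hx.prodMk (hl.prodMk contDiff_const)))

end NEPData
end NEPStability

open NEPStability

/-- Corollary 3.1: strong regularity of `S_KKT` is equivalent to strong regularity of `T_KKT`. -/
theorem stmt4 {N : ℕ} {n m d : Fin N → ℕ} (P : NEPData N n m d)
    (hC2 : P.IsC2Data)
    (pb : (∀ k, EuclideanSpace ℝ (Fin (m k))) × (∀ j, EuclideanSpace ℝ (Fin (n j)))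
      × (∀ k, EuclideanSpace ℝ (Fin (d k))))
    (xb : ∀ j, EuclideanSpace ℝ (Fin (n j))) (lb : ∀ k, EuclideanSpace ℝ (Fin (m k)))
    (hsol : (xb, lb) ∈ P.SKKT pb) :
    HasLipschitzLocalization P.SKKT pb (xb, lb) ↔
      HasLipschitzLocalization (P.TKKT pb.2.2) (pb.1, pb.2.1) (xb, lb) := by
  constructor
  · -- easy direction: restrict the localization to the tilt parameters
    intro h
    obtain ⟨hz, U, V, hU, hV, hpU, hzV, σ, ⟨K, hK⟩, hσV, hgr⟩ := h
    have hjlip : LipschitzWith 1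
        (fun uv : (∀ k, EuclideanSpace ℝ (Fin (m k))) × (∀ j, EuclideanSpace ℝ (Fin (n j))) =>
          (uv.1, uv.2, pb.2.2)) := by
      apply LipschitzWith.of_dist_le_mul
      intro a b
      rw [NNReal.coe_one, one_mul, Prod.dist_eq, Prod.dist_eq, Prod.dist_eq, dist_self]
      rw [max_eq_left dist_nonneg]
    have hjcont : Continuous
        (fun uv : (∀ k, EuclideanSpace ℝ (Fin (m k))) × (∀ j, EuclideanSpace ℝ (Fin (n j))) =>
          (uv.1, uv.2, pb.2.2)) :=
      continuous_fst.prodMk (continuous_snd.prodMk continuous_const)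
    refine ⟨hsol, (fun uv => (uv.1, uv.2, pb.2.2)) ⁻¹' U, V, hU.preimage hjcont, hV, hpU, hzV,
      σ ∘ (fun uv => (uv.1, uv.2, pb.2.2)), ⟨K * 1, hK.comp hjlip.lipschitzOnWith
        (fun uv huv => huv)⟩, fun uv huv => hσV _ huv, fun uv huv z hzv => hgr _ huv z hzv⟩
  · -- hard direction: implicit-function / fixed-point argument
    intro h
    have hq' : P.auxF pb.2.2 ((xb, lb), pb) = (pb.1, pb.2.1) :=
      P.auxF_eq_of_wb pb.2.2 (xb, lb) pb.1 pb.2.1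
    have hF : ContDiff ℝ 1 (P.auxF pb.2.2) := P.contDiff_auxF hC2 pb.2.2
    have hconst : (fun z : (∀ j, EuclideanSpace ℝ (Fin (n j)))
        × (∀ k, EuclideanSpace ℝ (Fin (m k))) => P.auxF pb.2.2 (z, pb))
        = fun _ => (pb.1, pb.2.1) := by
      funext z
      exact P.auxF_eq_of_wb pb.2.2 z pb.1 pb.2.1
    have hd1 : HasFDerivAt (fun z : (∀ j, EuclideanSpace ℝ (Fin (n j)))
        × (∀ k, EuclideanSpace ℝ (Fin (m k))) => P.auxF pb.2.2 (z, pb))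
        ((fderiv ℝ (P.auxF pb.2.2) ((xb, lb), pb)).comp
          (ContinuousLinearMap.inl ℝ _ _)) (xb, lb) :=
      by have := ((hF.differentiable one_ne_zero) ((xb, lb), pb)).hasFDerivAt.comp (xb, lb)
          (hasFDerivAt_prodMk_left (𝕜 := ℝ) (xb, lb) pb); exact this
    have hd2 : HasFDerivAt (fun z : (∀ j, EuclideanSpace ℝ (Fin (n j)))
        × (∀ k, EuclideanSpace ℝ (Fin (m k))) => P.auxF pb.2.2 (z, pb))
        (0 : ((∀ j, EuclideanSpace ℝ (Fin (n j))) × (∀ k, EuclideanSpace ℝ (Fin (m k)))) →L[ℝ]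
          ((∀ k, EuclideanSpace ℝ (Fin (m k))) × (∀ j, EuclideanSpace ℝ (Fin (n j)))))
        (xb, lb) := by
      rw [hconst]
      exact hasFDerivAt_const _ _
    have h0 := hd1.unique hd2
    refine transfer_localization P.SKKT (P.TKKT pb.2.2) (P.auxF pb.2.2) pb (xb, lb)
      hF h0 (fun z p => P.mem_SKKT_iff_auxF pb.2.2 z p) hsol ?_
    rw [hq']
    exact h
end
end

section
/- The following are equivalent: (i) S_KKT has a continuously differentiable single-valued localization around p̄ for (x̄,λ̄); (ii) T_KKT has a continuously differentiable single-valued localization around (ū,v̄) for (x̄,λ̄). -/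
open Function Set
open scoped InnerProductSpace

noncomputable section

open NEPStability
open scoped Topology

section AuxStmt7

open Function Set
open scoped InnerProductSpace

variable {N : ℕ} {n m d : Fin N → ℕ}

/-- coordinate formula for the gradient in Euclidean space. -/
private lemma gradient_coord {M : ℕ} (f : EuclideanSpace ℝ (Fin M) → ℝ)
    (x : EuclideanSpace ℝ (Fin M)) (i : Fin M) :
    gradient f x i = fderiv ℝ f x (EuclideanSpace.single i (1 : ℝ)) := by
  have h := InnerProductSpace.toDual_symm_apply (𝕜 := ℝ) (E := EuclideanSpace ℝ (Fin M))
    (y := fderiv ℝ f x) (x := EuclideanSpace.single i (1 : ℝ))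
  have h2 : gradient f x = (InnerProductSpace.toDual ℝ _).symm (fderiv ℝ f x) := rfl
  rw [← h, ← h2, real_inner_comm, EuclideanSpace.inner_single_left]
  simp

private lemma contDiff_update2 (k : Fin N) {nn : WithTop ℕ∞} :
    ContDiff ℝ nn (fun q : (∀ j, EuclideanSpace ℝ (Fin (n j))) × EuclideanSpace ℝ (Fin (n k)) =>
      Function.update q.1 k q.2) := by
  apply contDiff_pi.2
  intro j
  rcases eq_or_ne j k with h | h
  · subst h
    simp only [Function.update_self]
    exact contDiff_snd
  · simp only [Function.update_of_ne h]
    exact ((ContinuousLinearMap.proj (R := ℝ)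
      (φ := fun j => EuclideanSpace ℝ (Fin (n j))) j).contDiff).comp contDiff_fst

/-- The full parameter/state space element type for our implicit-function argument. -/
private abbrev ZP (N : ℕ) (n m d : Fin N → ℕ) : Type :=
  ((∀ j, EuclideanSpace ℝ (Fin (n j))) × (∀ k, EuclideanSpace ℝ (Fin (m k)))) ×
    (∀ k, EuclideanSpace ℝ (Fin (m k))) × (∀ j, EuclideanSpace ℝ (Fin (n j))) ×
      (∀ k, EuclideanSpace ℝ (Fin (d k)))

private lemma contDiff_gradLagMap (P : NEPData N n m d) (hC2 : P.IsC2Data) (k : Fin N) :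
    ContDiff ℝ 1 (fun c : ZP N n m d => P.gradLag k c.1.1 (c.1.2 k) (c.2.2.2 k)) := by
  have hF : ContDiff ℝ 2 (Function.uncurry
      (fun (c : ZP N n m d) (y : EuclideanSpace ℝ (Fin (n k))) =>
        P.f k (Function.update c.1.1 k y) (c.2.2.2 k) +
          ∑ i, c.1.2 k i * P.g k i y (c.2.2.2 k))) := by
    apply ContDiff.add
    · refine (hC2.1 k).comp (ContDiff.prodMk ?_ ?_)
      · exact (contDiff_update2 k).comp
          (((contDiff_fst.comp contDiff_fst).comp contDiff_fst).prodMk contDiff_snd)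
      · exact ((ContinuousLinearMap.proj (R := ℝ)
            (φ := fun k' => EuclideanSpace ℝ (Fin (d k'))) k).contDiff).comp
          ((contDiff_snd.comp (contDiff_snd.comp contDiff_snd)).comp contDiff_fst)
    · apply ContDiff.sum
      intro i _
      apply ContDiff.mul
      · exact ((EuclideanSpace.proj i : EuclideanSpace ℝ (Fin (m k)) →L[ℝ] ℝ).contDiff).comp
          (((ContinuousLinearMap.proj (R := ℝ)
              (φ := fun k' => EuclideanSpace ℝ (Fin (m k'))) k).contDiff).comp
            ((contDiff_snd.comp contDiff_fst).comp contDiff_fst))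
      · exact (hC2.2 k i).comp (contDiff_snd.prodMk
          (((ContinuousLinearMap.proj (R := ℝ)
              (φ := fun k' => EuclideanSpace ℝ (Fin (d k'))) k).contDiff).comp
            ((contDiff_snd.comp (contDiff_snd.comp contDiff_snd)).comp contDiff_fst)))
  have hgproj : ContDiff ℝ 1 (fun c : ZP N n m d => c.1.1 k) :=
    ((ContinuousLinearMap.proj (R := ℝ)
      (φ := fun j => EuclideanSpace ℝ (Fin (n j))) k).contDiff).comp
      (contDiff_fst.comp contDiff_fst)
  have hD : ContDiff ℝ 1 (fun c : ZP N n m d =>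
      fderiv ℝ (fun y : EuclideanSpace ℝ (Fin (n k)) =>
        P.f k (Function.update c.1.1 k y) (c.2.2.2 k) +
          ∑ i, c.1.2 k i * P.g k i y (c.2.2.2 k)) (c.1.1 k)) :=
    hF.fderiv hgproj (by norm_num)
  apply contDiff_euclidean.mpr
  intro i
  have heq : (fun c : ZP N n m d => P.gradLag k c.1.1 (c.1.2 k) (c.2.2.2 k) i) =
      fun c : ZP N n m d =>
        (fderiv ℝ (fun y : EuclideanSpace ℝ (Fin (n k)) =>
          P.f k (Function.update c.1.1 k y) (c.2.2.2 k) +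
            ∑ i, c.1.2 k i * P.g k i y (c.2.2.2 k)) (c.1.1 k))
          (EuclideanSpace.single i (1 : ℝ)) := by
    funext c
    exact gradient_coord _ _ i
  rw [heq]
  exact hD.clm_apply contDiff_const

end AuxStmt7

section AuxStmt7b

open Function Set
open scoped InnerProductSpace

variable {N : ℕ} {n m d : Fin N → ℕ}

/-- The shifted canonical parameters: `(u + g(x,w̄) - g(x,w), v + ∇L(x,λ,w̄) - ∇L(x,λ,w))`. -/
private def auxShiftU (P : NEPData N n m d) (wb : ∀ k, EuclideanSpace ℝ (Fin (d k)))
    (q : ZP N n m d) : ∀ k, EuclideanSpace ℝ (Fin (m k)) :=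
  fun k => WithLp.toLp 2 (fun i => P.g k i (q.1.1 k) (wb k) - P.g k i (q.1.1 k) (q.2.2.2 k))

private def auxShiftV (P : NEPData N n m d) (wb : ∀ k, EuclideanSpace ℝ (Fin (d k)))
    (q : ZP N n m d) : ∀ j, EuclideanSpace ℝ (Fin (n j)) :=
  fun k => P.gradLag k q.1.1 (q.1.2 k) (wb k) - P.gradLag k q.1.1 (q.1.2 k) (q.2.2.2 k)

private def auxShift (P : NEPData N n m d) (wb : ∀ k, EuclideanSpace ℝ (Fin (d k)))
    (q : ZP N n m d) :
    (∀ k, EuclideanSpace ℝ (Fin (m k))) × (∀ j, EuclideanSpace ℝ (Fin (n j))) :=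
  (q.2.1 + auxShiftU P wb q, q.2.2.1 + auxShiftV P wb q)

private lemma auxShift_contDiff (P : NEPData N n m d) (hC2 : P.IsC2Data)
    (wb : ∀ k, EuclideanSpace ℝ (Fin (d k))) : ContDiff ℝ 1 (auxShift P wb) := by
  apply ContDiff.prodMk
  · apply ContDiff.add
    · exact contDiff_fst.comp contDiff_snd
    · show ContDiff ℝ 1 fun q => auxShiftU P wb q
      apply contDiff_pi.2
      intro k
      apply contDiff_euclidean.mpr
      intro i
      simp only [auxShiftU, PiLp.toLp_apply]
      apply ContDiff.sub
      · exact ((hC2.2 k i).of_le (by norm_num)).comp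
          ((((ContinuousLinearMap.proj (R := ℝ)
              (φ := fun j => EuclideanSpace ℝ (Fin (n j))) k).contDiff).comp
            (contDiff_fst.comp contDiff_fst)).prodMk contDiff_const)
      · exact ((hC2.2 k i).of_le (by norm_num)).comp
          ((((ContinuousLinearMap.proj (R := ℝ)
              (φ := fun j => EuclideanSpace ℝ (Fin (n j))) k).contDiff).comp
            (contDiff_fst.comp contDiff_fst)).prodMk
            (((ContinuousLinearMap.proj (R := ℝ)
              (φ := fun k' => EuclideanSpace ℝ (Fin (d k'))) k).contDiff).comp
              (contDiff_snd.comp (contDiff_snd.comp contDiff_snd))))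
  · apply ContDiff.add
    · exact (contDiff_fst.comp contDiff_snd).comp contDiff_snd
    · show ContDiff ℝ 1 fun q => auxShiftV P wb q
      apply contDiff_pi.2
      intro k
      simp only [auxShiftV]
      apply ContDiff.sub
      · -- `q ↦ ∇L(x,λ,w̄)` : compose the gradLag map with `q ↦ ((x,λ),(u,v,w̄))`
        exact (contDiff_gradLagMap P hC2 k).comp
          (contDiff_fst.prodMk ((contDiff_fst.comp contDiff_snd).prodMk
            (((contDiff_fst.comp contDiff_snd).comp contDiff_snd).prodMk contDiff_const)))
      · exact contDiff_gradLagMap P hC2 k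

end AuxStmt7b

section AuxStmt7c

open Function Set
open scoped InnerProductSpace Topology

variable {N : ℕ} {n m d : Fin N → ℕ}

private abbrev Zsp (N : ℕ) (n m : Fin N → ℕ) : Type :=
  (∀ j, EuclideanSpace ℝ (Fin (n j))) × (∀ k, EuclideanSpace ℝ (Fin (m k)))

private abbrev Psp (N : ℕ) (n m d : Fin N → ℕ) : Type :=
  (∀ k, EuclideanSpace ℝ (Fin (m k))) × (∀ j, EuclideanSpace ℝ (Fin (n j))) ×
    (∀ k, EuclideanSpace ℝ (Fin (d k)))

private lemma veq {G : Type*} [AddCommGroup G] (a b v : G) : a = v + (a - b) ↔ b = v := by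
  constructor
  · intro h
    have h2 : v + (a - b) - (a - b) = v := add_sub_cancel_right v (a - b)
    rw [← h] at h2
    rwa [sub_sub_cancel] at h2
  · intro h
    rw [← h]
    abel

private lemma auxShift_base (P : NEPData N n m d) (wb : ∀ k, EuclideanSpace ℝ (Fin (d k)))
    (z : Zsp N n m) (u : ∀ k, EuclideanSpace ℝ (Fin (m k)))
    (v : ∀ j, EuclideanSpace ℝ (Fin (n j))) :
    auxShift P wb (z, (u, v, wb)) = (u, v) := by
  have h1 : auxShiftU P wb (z, (u, v, wb)) = 0 := by
    funext k
    ext i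
    simp [auxShiftU]
  have h2 : auxShiftV P wb (z, (u, v, wb)) = 0 := by
    funext k
    simp [auxShiftV]
  simp [auxShift, h1, h2]

private lemma mem_SKKT_iff_shift (P : NEPData N n m d)
    (wb : ∀ k, EuclideanSpace ℝ (Fin (d k))) (z : Zsp N n m) (p : Psp N n m d) :
    z ∈ P.SKKT p ↔
      z ∈ P.SKKT ((auxShift P wb (z, p)).1, (auxShift P wb (z, p)).2, wb) := by
  simp only [NEPData.SKKT, Set.mem_setOf_eq]
  refine forall_congr' fun k => ?_
  have hu : ∀ i : Fin (m k), (auxShift P wb (z, p)).1 k i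
      = p.1 k i + (P.g k i (z.1 k) (wb k) - P.g k i (z.1 k) (p.2.2 k)) := fun i => rfl
  have hv : (auxShift P wb (z, p)).2 k
      = p.2.1 k + (P.gradLag k z.1 (z.2 k) (wb k) - P.gradLag k z.1 (z.2 k) (p.2.2 k)) := rfl
  refine and_congr ?_ (and_congr ?_ ?_)
  · rw [hv]
    exact (veq _ _ _).symm
  · refine forall_congr' fun i => imp_congr_right fun _ => ?_
    rw [hu i]
    exact (veq _ _ _).symm
  · refine forall_congr' fun i => imp_congr_right fun _ => ?_
    rw [hu i]
    refine and_congr Iff.rfl (and_congr ?_ ?_)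
    · constructor <;> intro <;> linarith
    · have h3 : P.g k i (z.1 k) (wb k)
          - (p.1 k i + (P.g k i (z.1 k) (wb k) - P.g k i (z.1 k) (p.2.2 k)))
          = P.g k i (z.1 k) (p.2.2 k) - p.1 k i := by ring
      rw [h3]

end AuxStmt7c

set_option maxHeartbeats 2000000 in
/-- Corollary 4.2: continuously differentiable localization of `S_KKT` is equivalent to that of `T_KKT`. -/
theorem stmt7 {N : ℕ} {n m d : Fin N → ℕ} (P : NEPData N n m d)
    (hC2 : P.IsC2Data)
    (pb : (∀ k, EuclideanSpace ℝ (Fin (m k))) × (∀ j, EuclideanSpace ℝ (Fin (n j)))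
      × (∀ k, EuclideanSpace ℝ (Fin (d k))))
    (xb : ∀ j, EuclideanSpace ℝ (Fin (n j))) (lb : ∀ k, EuclideanSpace ℝ (Fin (m k)))
    (hsol : (xb, lb) ∈ P.SKKT pb) :
    HasC1Localization P.SKKT pb (xb, lb) ↔
      HasC1Localization (P.TKKT pb.2.2) (pb.1, pb.2.1) (xb, lb) := by
  constructor
  · rintro ⟨hmem, U, V, hUo, hVo, hUmem, hVmem, σ, hσ, hσV, hiff⟩
    refine ⟨hsol, (fun uv : (∀ k, EuclideanSpace ℝ (Fin (m k)))
        × (∀ j, EuclideanSpace ℝ (Fin (n j))) => (uv.1, uv.2, pb.2.2)) ⁻¹' U, V,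
      hUo.preimage (continuous_fst.prodMk (continuous_snd.prodMk continuous_const)), hVo,
      hUmem, hVmem, fun uv => σ (uv.1, uv.2, pb.2.2), ?_, ?_, ?_⟩
    · exact hσ.comp ((contDiff_fst.prodMk (contDiff_snd.prodMk contDiff_const)).contDiffOn)
        (fun q hq => hq)
    · exact fun q hq => hσV _ hq
    · exact fun q hq zz hz => hiff _ hq zz hz
  · rintro ⟨hmemT, U', V', hU'o, hV'o, hU'mem, hV'mem, σ, hσ, hσV', hiff⟩
    classical
    have hΦc : ContDiff ℝ 1 (auxShift P pb.2.2) := auxShift_contDiff P hC2 pb.2.2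
    have hΦq0 : auxShift P pb.2.2 ((xb, lb), pb) = (pb.1, pb.2.1) :=
      auxShift_base P pb.2.2 (xb, lb) pb.1 pb.2.1
    have hσb : σ (pb.1, pb.2.1) = (xb, lb) := ((hiff _ hU'mem _ hV'mem).1 hmemT).symm
    have hσat : ContDiffAt ℝ 1 σ (pb.1, pb.2.1) := hσ.contDiffAt (hU'o.mem_nhds hU'mem)
    have hσat' : ContDiffAt ℝ 1 σ (auxShift P pb.2.2 ((xb, lb), pb)) := hΦq0.symm ▸ hσat
    have hσst : HasStrictFDerivAt σ (fderiv ℝ σ (pb.1, pb.2.1)) (pb.1, pb.2.1) :=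
      hσat.hasStrictFDerivAt one_ne_zero
    set σ' := fderiv ℝ σ (pb.1, pb.2.1) with hσ'def
    set Φ' := fderiv ℝ (auxShift P pb.2.2) ((xb, lb), pb) with hΦ'def
    have hΦst : HasStrictFDerivAt (auxShift P pb.2.2) Φ' ((xb, lb), pb) :=
      hΦc.contDiffAt.hasStrictFDerivAt one_ne_zero
    -- the partial derivative of the shift in the state variable vanishes
    have hinl : ∀ ζ : Zsp N n m, Φ' (ζ, (0 : Psp N n m d)) = 0 := by
      have hconst : (fun z : Zsp N n m => auxShift P pb.2.2 (z, pb))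
          = fun _ => (pb.1, pb.2.1) :=
        funext fun z => auxShift_base P pb.2.2 z pb.1 pb.2.1
      have hcomp : HasFDerivAt (fun z : Zsp N n m => auxShift P pb.2.2 (z, pb))
          (Φ'.comp ((ContinuousLinearMap.id ℝ (Zsp N n m)).prod 0)) (xb, lb) :=
        hΦst.hasFDerivAt.comp (xb, lb) (f := fun z : Zsp N n m => (z, pb))
          ((hasFDerivAt_id (xb, lb)).prodMk (hasFDerivAt_const pb (xb, lb)))
      have h0 : HasFDerivAt (fun z : Zsp N n m => auxShift P pb.2.2 (z, pb))
          (0 : Zsp N n m →L[ℝ] _) (xb, lb) := by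
        rw [hconst]; exact hasFDerivAt_const _ _
      have huniq := hcomp.unique h0
      intro ζ
      have : (Φ'.comp ((ContinuousLinearMap.id ℝ (Zsp N n m)).prod 0)) ζ = 0 := by
        rw [huniq]; rfl
      exact this
    set A : Psp N n m d →L[ℝ] Zsp N n m :=
      (σ'.comp Φ').comp (ContinuousLinearMap.inr ℝ (Zsp N n m) (Psp N n m d)) with hAdef
    have hsplit : ∀ q : Zsp N n m × Psp N n m d, σ' (Φ' q) = A q.2 := by
      intro q
      have hq : q = ((q.1, (0 : Psp N n m d)) : Zsp N n m × Psp N n m d)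
          + (((0 : Zsp N n m), q.2) : Zsp N n m × Psp N n m d) := by
        apply Prod.ext <;> simp
      calc σ' (Φ' q) = σ' (Φ' ((q.1, (0 : Psp N n m d)) + ((0 : Zsp N n m), q.2))) := by
            rw [← hq]
        _ = σ' (Φ' (q.1, (0 : Psp N n m d)) + Φ' ((0 : Zsp N n m), q.2)) := by
            rw [map_add]
        _ = σ' (Φ' ((0 : Zsp N n m), q.2)) := by rw [hinl q.1, zero_add]
        _ = A q.2 := rfl
    -- the invertible linear map
    set e : (Zsp N n m × Psp N n m d) ≃L[ℝ] (Zsp N n m × Psp N n m d) :=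
      { toFun := fun q => (q.1 - A q.2, q.2)
        invFun := fun q => (q.1 + A q.2, q.2)
        map_add' := by
          intro a b
          apply Prod.ext
          · show a.1 + b.1 - A (a.2 + b.2) = a.1 - A a.2 + (b.1 - A b.2)
            rw [map_add]; abel
          · rfl
        map_smul' := by
          intro c a
          apply Prod.ext
          · show c • a.1 - A (c • a.2) = c • (a.1 - A a.2)
            rw [map_smul, smul_sub]
          · rfl
        left_inv := by
          intro q
          apply Prod.ext
          · show q.1 - A q.2 + A q.2 = q.1
            abel
          · rfl
        right_inv := by
          intro q
          apply Prod.ext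
          · show q.1 + A q.2 - A q.2 = q.1
            abel
          · rfl
        continuous_toFun :=
          (continuous_fst.sub (A.continuous.comp continuous_snd)).prodMk continuous_snd
        continuous_invFun :=
          (continuous_fst.add (A.continuous.comp continuous_snd)).prodMk continuous_snd }
      with hedef
    set Θ : Zsp N n m × Psp N n m d → Zsp N n m × Psp N n m d :=
      fun q => (q.1 - σ (auxShift P pb.2.2 q), q.2) with hΘdef
    have hcompσ : HasStrictFDerivAt (fun q : Zsp N n m × Psp N n m d =>
        σ (auxShift P pb.2.2 q)) (σ'.comp Φ') ((xb, lb), pb) :=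
      (hΦq0.symm ▸ hσst).comp _ hΦst
    have hΘst : HasStrictFDerivAt Θ
        (e : (Zsp N n m × Psp N n m d) →L[ℝ] (Zsp N n m × Psp N n m d)) ((xb, lb), pb) := by
      have hbig := (((ContinuousLinearMap.fst ℝ (Zsp N n m)
        (Psp N n m d)).hasStrictFDerivAt (x := ((xb, lb), pb))).sub hcompσ).prodMk
        ((ContinuousLinearMap.snd ℝ (Zsp N n m) (Psp N n m d)).hasStrictFDerivAt)
      have heq : ((ContinuousLinearMap.fst ℝ (Zsp N n m) (Psp N n m d) - σ'.comp Φ').prod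
          (ContinuousLinearMap.snd ℝ (Zsp N n m) (Psp N n m d)))
          = (e : (Zsp N n m × Psp N n m d) →L[ℝ] (Zsp N n m × Psp N n m d)) := by
        apply ContinuousLinearMap.ext
        intro q
        apply Prod.ext
        · show q.1 - σ' (Φ' q) = q.1 - A q.2
          rw [hsplit q]
        · rfl
      exact heq ▸ hbig
    have hΘq0 : Θ ((xb, lb), pb) = (((0 : Zsp N n m), pb) : Zsp N n m × Psp N n m d) := by
      show ((xb, lb) - σ (auxShift P pb.2.2 ((xb, lb), pb)), pb) = _
      rw [hΦq0, hσb, sub_self]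
    have hΘat : ContDiffAt ℝ 1 Θ ((xb, lb), pb) :=
      (contDiff_fst.contDiffAt.sub (hσat'.comp _ hΦc.contDiffAt)).prodMk contDiff_snd.contDiffAt
    set ψ : Zsp N n m × Psp N n m d → Zsp N n m × Psp N n m d :=
      hΘst.localInverse Θ e ((xb, lb), pb) with hψdef
    have hψ0 : ψ (Θ ((xb, lb), pb)) = ((xb, lb), pb) := hΘst.localInverse_apply_image
    have hψat : ContDiffAt ℝ 1 ψ (Θ ((xb, lb), pb)) :=
      hΘat.to_localInverse hΘst.hasFDerivAt one_ne_zero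
    obtain ⟨su, hsu, hψOn⟩ := hψat.contDiffOn le_rfl (by norm_num)
    have hs'o : IsOpen (interior su) := isOpen_interior
    have hs'mem : Θ ((xb, lb), pb) ∈ interior su := mem_interior_iff_mem_nhds.2 hsu
    have hψOn' : ContDiffOn ℝ 1 ψ (interior su) := hψOn.mono interior_subset
    obtain ⟨t₁, ht₁, hleft⟩ := hΘst.eventually_left_inverse.exists_mem
    obtain ⟨t₂, ht₂, hright⟩ := hΘst.eventually_right_inverse.exists_mem
    set G : Set (Zsp N n m × Psp N n m d) :=
      {q | auxShift P pb.2.2 q ∈ U' ∧ q.1 ∈ V'} with hGdef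
    have hGo : IsOpen G := (hU'o.preimage hΦc.continuous).inter (hV'o.preimage continuous_fst)
    have hq0G : (((xb, lb), pb) : Zsp N n m × Psp N n m d) ∈ G := by
      refine ⟨?_, hV'mem⟩
      show auxShift P pb.2.2 ((xb, lb), pb) ∈ U'
      rw [hΦq0]; exact hU'mem
    have hO₁o : IsOpen (interior t₁ ∩ G) := isOpen_interior.inter hGo
    have hq0O₁ : (((xb, lb), pb) : Zsp N n m × Psp N n m d) ∈ interior t₁ ∩ G :=
      ⟨mem_interior_iff_mem_nhds.2 ht₁, hq0G⟩
    have hO₁nhds : interior t₁ ∩ G ∈ 𝓝 (((xb, lb), pb) : Zsp N n m × Psp N n m d) :=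
      hO₁o.mem_nhds hq0O₁
    rw [nhds_prod_eq] at hO₁nhds
    obtain ⟨v₁, hv₁, v₂, hv₂, hsub⟩ := Filter.mem_prod_iff.1 hO₁nhds
    have hV₀o : IsOpen (interior v₁) := isOpen_interior
    have hU₀o : IsOpen (interior v₂) := isOpen_interior
    have hzbV₀ : ((xb, lb) : Zsp N n m) ∈ interior v₁ := mem_interior_iff_mem_nhds.2 hv₁
    have hpbU₀ : pb ∈ interior v₂ := mem_interior_iff_mem_nhds.2 hv₂
    have hsub' : interior v₁ ×ˢ interior v₂ ⊆ interior t₁ ∩ G := fun q hq =>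
      hsub ⟨interior_subset hq.1, interior_subset hq.2⟩
    set Wo : Set (Zsp N n m × Psp N n m d) :=
      interior su ∩ ψ ⁻¹' (G ∩ interior v₁ ×ˢ (univ : Set (Psp N n m d))) with hWodef
    have hWoo : IsOpen Wo :=
      hψOn'.continuousOn.isOpen_inter_preimage hs'o (hGo.inter (hV₀o.prod isOpen_univ))
    have hΘq0W : Θ ((xb, lb), pb) ∈ Wo := by
      refine ⟨hs'mem, ?_⟩
      show ψ (Θ ((xb, lb), pb)) ∈ G ∩ interior v₁ ×ˢ (univ : Set (Psp N n m d))
      rw [hψ0]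
      exact ⟨hq0G, ⟨hzbV₀, trivial⟩⟩
    set UU : Set (Psp N n m d) := interior v₂ ∩
      (fun p : Psp N n m d => (((0 : Zsp N n m), p) : Zsp N n m × Psp N n m d)) ⁻¹'
        (interior t₂ ∩ Wo) with hUUdef
    have hUUo : IsOpen UU := hU₀o.inter ((isOpen_interior.inter hWoo).preimage
      (continuous_const.prodMk continuous_id))
    have hpbUU : pb ∈ UU := by
      refine ⟨hpbU₀, ?_⟩
      show (((0 : Zsp N n m), pb) : Zsp N n m × Psp N n m d) ∈ interior t₂ ∩ Wo
      rw [← hΘq0]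
      exact ⟨mem_interior_iff_mem_nhds.2 ht₂, hΘq0W⟩
    refine ⟨hsol, UU, interior v₁, hUUo, hV₀o, hpbUU, hzbV₀,
      fun p => (ψ ((0 : Zsp N n m), p)).1, ?_, ?_, ?_⟩
    · have hj : ContDiff ℝ 1 (fun p : Psp N n m d =>
          (((0 : Zsp N n m), p) : Zsp N n m × Psp N n m d)) := contDiff_const.prodMk contDiff_id
      have hcomp2 : ContDiffOn ℝ 1 (fun p : Psp N n m d => ψ ((0 : Zsp N n m), p)) UU :=
        hψOn'.comp hj.contDiffOn (fun p hp => hp.2.2.1)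
      exact contDiff_fst.comp_contDiffOn hcomp2
    · intro p hp
      exact hp.2.2.2.2.1
    · intro p hp z hz
      constructor
      · intro hzS
        have hzpO₁ : ((z, p) : Zsp N n m × Psp N n m d) ∈ interior t₁ ∩ G :=
          hsub' ⟨hz, hp.1⟩
        have hzT : z ∈ P.SKKT ((auxShift P pb.2.2 (z, p)).1,
            (auxShift P pb.2.2 (z, p)).2, pb.2.2) :=
          (mem_SKKT_iff_shift P pb.2.2 z p).1 hzS
        have hzσ : z = σ (auxShift P pb.2.2 (z, p)) :=
          (hiff _ hzpO₁.2.1 z hzpO₁.2.2).1 hzT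
        have hΘzp : Θ (z, p) = (((0 : Zsp N n m), p) : Zsp N n m × Psp N n m d) := by
          show (z - σ (auxShift P pb.2.2 (z, p)), p) = _
          rw [← hzσ, sub_self]
        have h1 : ψ (Θ (z, p)) = (z, p) := hleft _ (interior_subset hzpO₁.1)
        rw [hΘzp] at h1
        show z = (ψ (((0 : Zsp N n m), p) : Zsp N n m × Psp N n m d)).1
        rw [h1]
      · intro hzσ
        have hp2 := hp.2
        have hr : Θ (ψ ((0 : Zsp N n m), p)) = ((0 : Zsp N n m), p) :=
          hright _ (interior_subset hp2.1)
        have hq'2 : (ψ ((0 : Zsp N n m), p)).2 = p := congrArg Prod.snd hr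
        have hq'1 : (ψ ((0 : Zsp N n m), p)).1
            = σ (auxShift P pb.2.2 (ψ ((0 : Zsp N n m), p))) := by
          have h2 := congrArg Prod.fst hr
          exact sub_eq_zero.1 h2
        have hq'G : ψ ((0 : Zsp N n m), p) ∈ G := hp2.2.2.1
        have hT : (ψ ((0 : Zsp N n m), p)).1 ∈
            P.TKKT pb.2.2 (auxShift P pb.2.2 (ψ ((0 : Zsp N n m), p))) :=
          (hiff _ hq'G.1 _ hq'G.2).2 hq'1
        have hS : (ψ ((0 : Zsp N n m), p)).1 ∈
            P.SKKT ((ψ ((0 : Zsp N n m), p)).2) :=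
          (mem_SKKT_iff_shift P pb.2.2 (ψ ((0 : Zsp N n m), p)).1
            (ψ ((0 : Zsp N n m), p)).2).2 hT
        rw [hq'2] at hS
        rw [hzσ]
        exact hS
end
end

section
/- The following are equivalent: (i) S_KKT is isolated calm at p̄ for (x̄,λ̄); (ii) T_KKT is isolated calm at (ū,v̄) for (x̄,λ̄). -/
open Function Set
open scoped InnerProductSpace

noncomputable section

open NEPStability

namespace NEPStability

namespace NEPData

variable {N : ℕ} {n m d : Fin N → ℕ} (P : NEPData N n m d)

private lemma eq_shift_iff {G : Type*} [AddCommGroup G] (a a' v : G) :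
    a' = v + (a' - a) ↔ a = v := by
  rw [← sub_eq_iff_eq_add, sub_sub_cancel]

/-- The shift map absorbing the change of `w` into canonical perturbations. -/
def shiftMap (wb : ∀ k, EuclideanSpace ℝ (Fin (d k)))
    (z : ((∀ j, EuclideanSpace ℝ (Fin (n j))) × (∀ k, EuclideanSpace ℝ (Fin (m k)))) ×
      (∀ k, EuclideanSpace ℝ (Fin (d k)))) :
    (∀ k, EuclideanSpace ℝ (Fin (m k))) × (∀ j, EuclideanSpace ℝ (Fin (n j))) :=
  (fun k => (WithLp.toLp 2 (fun i => P.g k i (z.1.1 k) (wb k) - P.g k i (z.1.1 k) (z.2 k)) :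
      EuclideanSpace ℝ (Fin (m k))),
   fun k => P.gradLag k z.1.1 (z.1.2 k) (wb k) - P.gradLag k z.1.1 (z.1.2 k) (z.2 k))

lemma shiftMap_self (wb : ∀ k, EuclideanSpace ℝ (Fin (d k)))
    (z : ((∀ j, EuclideanSpace ℝ (Fin (n j))) × (∀ k, EuclideanSpace ℝ (Fin (m k))))) :
    P.shiftMap wb (z, wb) = 0 := by
  unfold shiftMap
  simp only [sub_self]
  rfl

lemma mem_SKKT_iff_shift (wb : ∀ k, EuclideanSpace ℝ (Fin (d k)))
    (p : (∀ k, EuclideanSpace ℝ (Fin (m k))) × (∀ j, EuclideanSpace ℝ (Fin (n j)))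
      × (∀ k, EuclideanSpace ℝ (Fin (d k))))
    (xl : (∀ j, EuclideanSpace ℝ (Fin (n j))) × (∀ k, EuclideanSpace ℝ (Fin (m k)))) :
    xl ∈ P.SKKT p ↔
      xl ∈ P.TKKT wb ((p.1, p.2.1) + P.shiftMap wb (xl, p.2.2)) := by
  set s := P.shiftMap wb (xl, p.2.2) with hs
  have hs1 : ∀ (k : Fin N) (i : Fin (m k)),
      s.1 k i = P.g k i (xl.1 k) (wb k) - P.g k i (xl.1 k) (p.2.2 k) := fun k i => rfl
  have hs2 : ∀ k : Fin N,
      s.2 k = P.gradLag k xl.1 (xl.2 k) (wb k) - P.gradLag k xl.1 (xl.2 k) (p.2.2 k) :=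
    fun k => rfl
  unfold TKKT
  unfold SKKT
  simp only [Set.mem_setOf_eq, Prod.fst_add, Prod.snd_add, Pi.add_apply, PiLp.add_apply]
  refine forall_congr' fun k => ?_
  refine and_congr ?_ (and_congr ?_ ?_)
  · rw [hs2 k]
    exact (eq_shift_iff _ _ _).symm
  · refine forall₂_congr fun i hi => ?_
    rw [hs1 k i]
    exact (eq_shift_iff _ _ _).symm
  · refine forall₂_congr fun i hi => ?_
    refine and_congr Iff.rfl (and_congr ?_ ?_)
    · rw [hs1 k i]
      constructor <;> intro h <;> linarith
    · rw [hs1 k i, show P.g k i (xl.1 k) (wb k) -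
          (p.1 k i + (P.g k i (xl.1 k) (wb k) - P.g k i (xl.1 k) (p.2.2 k)))
          = P.g k i (xl.1 k) (p.2.2 k) - p.1 k i from by ring]

lemma shiftMap_contDiff (wb : ∀ k, EuclideanSpace ℝ (Fin (d k))) (hC2 : P.IsC2Data) :
    ContDiff ℝ 1 (P.shiftMap wb) := by
  set Q := ((∀ j, EuclideanSpace ℝ (Fin (n j))) × (∀ k, EuclideanSpace ℝ (Fin (m k)))) ×
      (∀ k, EuclideanSpace ℝ (Fin (d k))) with hQ
  let PX : ∀ k : Fin N, (∀ j, EuclideanSpace ℝ (Fin (n j))) →L[ℝ]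
      EuclideanSpace ℝ (Fin (n k)) := fun k => ContinuousLinearMap.proj k
  let PL : ∀ k : Fin N, (∀ k', EuclideanSpace ℝ (Fin (m k'))) →L[ℝ]
      EuclideanSpace ℝ (Fin (m k)) := fun k => ContinuousLinearMap.proj k
  let PW : ∀ k : Fin N, (∀ k', EuclideanSpace ℝ (Fin (d k'))) →L[ℝ]
      EuclideanSpace ℝ (Fin (d k)) := fun k => ContinuousLinearMap.proj k
  have hx : ∀ k, ContDiff ℝ 1 fun z : Q => z.1.1 k :=
    fun k => (PX k).contDiff.comp contDiff_fst.fst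
  have hw : ∀ k, ContDiff ℝ 1 fun z : Q => z.2 k :=
    fun k => (PW k).contDiff.comp contDiff_snd
  have hg : ∀ (k : Fin N) (i : Fin (m k)) (ω : Q → EuclideanSpace ℝ (Fin (d k))),
      ContDiff ℝ 1 ω →
      ContDiff ℝ 1 fun z : Q => P.g k i (z.1.1 k) (ω z) := fun k i ω hω =>
    ((hC2.2 k i).of_le one_le_two).comp ((hx k).prodMk hω)
  have hgl : ∀ (k : Fin N) (ω : Q → EuclideanSpace ℝ (Fin (d k))), ContDiff ℝ 2 ω →
      ContDiff ℝ 1 fun z : Q => P.gradLag k z.1.1 (z.1.2 k) (ω z) := by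
    intro k ω hω
    unfold gradLag gradient
    have hfd : ContDiff ℝ 1 fun z : Q => fderiv ℝ
        (fun y : EuclideanSpace ℝ (Fin (n k)) =>
          P.f k (Function.update z.1.1 k y) (ω z) + ∑ i, z.1.2 k i * P.g k i y (ω z))
        (z.1.1 k) := by
      have hupd : ContDiff ℝ 2 fun q : Q × EuclideanSpace ℝ (Fin (n k)) =>
          Function.update q.1.1.1 k q.2 := by
        refine contDiff_pi.2 fun j => ?_
        rcases eq_or_ne j k with rfl | hjk
        · simp only [Function.update_self]
          exact contDiff_snd
        · simp only [Function.update_of_ne hjk]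
          exact (PX j).contDiff.comp contDiff_fst.fst.fst
      have hfA : ContDiff ℝ 2 fun q : Q × EuclideanSpace ℝ (Fin (n k)) =>
          P.f k (Function.update q.1.1.1 k q.2) (ω q.1) :=
        (hC2.1 k).comp (hupd.prodMk (hω.comp contDiff_fst))
      have hfB : ContDiff ℝ 2 fun q : Q × EuclideanSpace ℝ (Fin (n k)) =>
          ∑ i, q.1.1.2 k i * P.g k i q.2 (ω q.1) := by
        refine ContDiff.sum fun i _ => ?_
        have hl0 : ContDiff ℝ 2 fun q : Q × EuclideanSpace ℝ (Fin (n k)) => q.1.1.2 :=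
          contDiff_fst.fst.snd
        have hl : ContDiff ℝ 2 fun q : Q × EuclideanSpace ℝ (Fin (n k)) => q.1.1.2 k i :=
          ((EuclideanSpace.proj i).comp (PL k)).contDiff.comp hl0
        exact hl.mul ((hC2.2 k i).comp (contDiff_snd.prodMk (hω.comp contDiff_fst)))
      exact ContDiff.fderiv
        (f := fun (z : Q) (y : EuclideanSpace ℝ (Fin (n k))) =>
          P.f k (Function.update z.1.1 k y) (ω z) + ∑ i, z.1.2 k i * P.g k i y (ω z))
        (g := fun z : Q => z.1.1 k)
        (hfA.add hfB) (hx k) (by norm_num)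
    exact (InnerProductSpace.toDual ℝ
      (EuclideanSpace ℝ (Fin (n k)))).symm.contDiff.comp hfd
  have h1 : ContDiff ℝ 1 (fun z : Q =>
      (fun k => ((PiLp.continuousLinearEquiv 2 ℝ (fun _ : Fin (m k) => ℝ)).symm
        (fun i => P.g k i (z.1.1 k) (wb k) - P.g k i (z.1.1 k) (z.2 k))) :
        ∀ k, EuclideanSpace ℝ (Fin (m k)))) := by
    refine contDiff_pi.2 fun k => ?_
    exact (PiLp.continuousLinearEquiv 2 ℝ (fun _ : Fin (m k) => ℝ)).symm.contDiff.comp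
      (contDiff_pi.2 fun i => (hg k i _ contDiff_const).sub (hg k i _ (hw k)))
  have h2 : ContDiff ℝ 1 (fun z : Q =>
      (fun k => P.gradLag k z.1.1 (z.1.2 k) (wb k) - P.gradLag k z.1.1 (z.1.2 k) (z.2 k) :
        ∀ j, EuclideanSpace ℝ (Fin (n j)))) := by
    refine contDiff_pi.2 fun k => ?_
    exact (hgl k _ contDiff_const).sub (hgl k _ ((PW k).contDiff.comp contDiff_snd))
  exact h1.prodMk h2

end NEPData

end NEPStability

open NEPStability

/-- Corollary 5.1: isolated calmness of `S_KKT` is equivalent to isolated calmness of `T_KKT`. -/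
theorem stmt9 {N : ℕ} {n m d : Fin N → ℕ} (P : NEPData N n m d)
    (hC2 : P.IsC2Data)
    (pb : (∀ k, EuclideanSpace ℝ (Fin (m k))) × (∀ j, EuclideanSpace ℝ (Fin (n j)))
      × (∀ k, EuclideanSpace ℝ (Fin (d k))))
    (xb : ∀ j, EuclideanSpace ℝ (Fin (n j))) (lb : ∀ k, EuclideanSpace ℝ (Fin (m k)))
    (hsol : (xb, lb) ∈ P.SKKT pb) :
    IsolatedCalmAt P.SKKT pb (xb, lb) ↔
      IsolatedCalmAt (P.TKKT pb.2.2) (pb.1, pb.2.1) (xb, lb) := by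
  constructor
  · rintro ⟨-, κ, hκ, U, V, hUo, hVo, hpU, hbV, hbd⟩
    have hecont : Continuous fun uv : (∀ k, EuclideanSpace ℝ (Fin (m k))) ×
        (∀ j, EuclideanSpace ℝ (Fin (n j))) => (uv.1, uv.2, pb.2.2) :=
      continuous_fst.prodMk (continuous_snd.prodMk continuous_const)
    refine ⟨hsol, κ, hκ,
      (fun uv : (∀ k, EuclideanSpace ℝ (Fin (m k))) ×
        (∀ j, EuclideanSpace ℝ (Fin (n j))) => (uv.1, uv.2, pb.2.2)) ⁻¹' U, V,
      hUo.preimage hecont, hVo, hpU, hbV, ?_⟩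
    intro q hq z hz
    have h1 := hbd (q.1, q.2, pb.2.2) hq z hz
    have h2 : ‖((q.1, q.2, pb.2.2) :
        (∀ k, EuclideanSpace ℝ (Fin (m k))) × (∀ j, EuclideanSpace ℝ (Fin (n j)))
          × (∀ k, EuclideanSpace ℝ (Fin (d k)))) - pb‖ = ‖q - (pb.1, pb.2.1)‖ := by
      rw [← dist_eq_norm, ← dist_eq_norm, Prod.dist_eq, Prod.dist_eq, Prod.dist_eq]
      simp only [dist_self]
      rw [max_eq_left dist_nonneg]
    rwa [h2] at h1
  · rintro ⟨-, κ, hκ, U, V, hUo, hVo, haU, hbV, hbd⟩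
    have hshift := P.shiftMap_contDiff pb.2.2 hC2
    obtain ⟨K, t, ht, hlip⟩ :=
      (hshift.contDiffAt (x := ((xb, lb), pb.2.2))).exists_lipschitzOnWith
    obtain ⟨ε, hε, hball⟩ := Metric.mem_nhds_iff.1 ht
    have hΘcont : Continuous fun q : ((∀ k, EuclideanSpace ℝ (Fin (m k))) ×
        (∀ j, EuclideanSpace ℝ (Fin (n j))) × (∀ k, EuclideanSpace ℝ (Fin (d k)))) ×
        ((∀ j, EuclideanSpace ℝ (Fin (n j))) × (∀ k, EuclideanSpace ℝ (Fin (m k)))) =>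
        (q.1.1, q.1.2.1) + P.shiftMap pb.2.2 (q.2, q.1.2.2) :=
      (continuous_fst.fst.prodMk continuous_fst.snd.fst).add
        (hshift.continuous.comp (continuous_snd.prodMk continuous_fst.snd.snd))
    have hmemO : ((pb, ((xb, lb))) :
        ((∀ k, EuclideanSpace ℝ (Fin (m k))) × (∀ j, EuclideanSpace ℝ (Fin (n j)))
          × (∀ k, EuclideanSpace ℝ (Fin (d k)))) ×
        ((∀ j, EuclideanSpace ℝ (Fin (n j))) × (∀ k, EuclideanSpace ℝ (Fin (m k))))) ∈
        (fun q : ((∀ k, EuclideanSpace ℝ (Fin (m k))) ×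
          (∀ j, EuclideanSpace ℝ (Fin (n j))) × (∀ k, EuclideanSpace ℝ (Fin (d k)))) ×
          ((∀ j, EuclideanSpace ℝ (Fin (n j))) × (∀ k, EuclideanSpace ℝ (Fin (m k)))) =>
          (q.1.1, q.1.2.1) + P.shiftMap pb.2.2 (q.2, q.1.2.2)) ⁻¹' U := by
      simp only [Set.mem_preimage]
      rw [P.shiftMap_self, add_zero]
      exact haU
    obtain ⟨δ, hδ, hδsub⟩ := Metric.isOpen_iff.1 (hUo.preimage hΘcont) _ hmemO
    set r := min δ ε with hr
    have hr0 : 0 < r := lt_min hδ hε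
    refine ⟨hsol, κ * (1 + K), mul_nonneg hκ (by positivity), Metric.ball pb r,
      V ∩ Metric.ball (xb, lb) r, Metric.isOpen_ball, hVo.inter Metric.isOpen_ball,
      Metric.mem_ball_self hr0, ⟨hbV, Metric.mem_ball_self hr0⟩, ?_⟩
    intro q hq z hz
    obtain ⟨hzS, hzV, hzr⟩ := hz
    set q' := (q.1, q.2.1) + P.shiftMap pb.2.2 (z, q.2.2) with hq'def
    have hzT : z ∈ P.TKKT pb.2.2 q' := (P.mem_SKKT_iff_shift pb.2.2 q z).1 hzS
    have hqz : ((q, z)) ∈ Metric.ball ((pb, ((xb, lb) :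
        (∀ j, EuclideanSpace ℝ (Fin (n j))) × (∀ k, EuclideanSpace ℝ (Fin (m k)))))) δ := by
      rw [Metric.mem_ball, Prod.dist_eq]
      exact max_lt ((Metric.mem_ball.1 hq).trans_le (min_le_left _ _))
        ((Metric.mem_ball.1 hzr).trans_le (min_le_left _ _))
    have hq'U : q' ∈ U := hδsub hqz
    have h1 := hbd q' hq'U z ⟨hzT, hzV⟩
    have hwq : dist q.2.2 pb.2.2 ≤ dist q pb := by
      have e1 : dist q.2.2 pb.2.2 ≤ dist q.2 pb.2 := by
        rw [Prod.dist_eq]; exact le_max_right _ _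
      have e2 : dist q.2 pb.2 ≤ dist q pb := by
        rw [Prod.dist_eq]; exact le_max_right _ _
      exact e1.trans e2
    have hmem1 : ((z, q.2.2)) ∈ t := by
      refine hball ?_
      rw [Metric.mem_ball, Prod.dist_eq]
      exact max_lt ((Metric.mem_ball.1 hzr).trans_le (min_le_right _ _))
        (hwq.trans_lt ((Metric.mem_ball.1 hq).trans_le (min_le_right _ _)))
    have hmem2 : ((z, pb.2.2)) ∈ t := by
      refine hball ?_
      rw [Metric.mem_ball, Prod.dist_eq, dist_self]
      exact max_lt ((Metric.mem_ball.1 hzr).trans_le (min_le_right _ _)) hε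
    have hshiftbound : ‖P.shiftMap pb.2.2 (z, q.2.2)‖ ≤ K * ‖q - pb‖ := by
      have h0 := hlip.dist_le_mul _ hmem1 _ hmem2
      rw [P.shiftMap_self] at h0
      have hdd : dist ((z, q.2.2)) ((z, pb.2.2)) = dist q.2.2 pb.2.2 := by
        rw [Prod.dist_eq, dist_self]
        exact max_eq_right dist_nonneg
      rw [hdd, dist_zero_right] at h0
      calc ‖P.shiftMap pb.2.2 (z, q.2.2)‖ ≤ K * dist q.2.2 pb.2.2 := h0
        _ ≤ K * dist q pb := mul_le_mul_of_nonneg_left hwq K.coe_nonneg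
        _ = K * ‖q - pb‖ := by rw [dist_eq_norm]
    have hproj : ‖((q.1, q.2.1) : (∀ k, EuclideanSpace ℝ (Fin (m k))) ×
        (∀ j, EuclideanSpace ℝ (Fin (n j)))) - (pb.1, pb.2.1)‖ ≤ ‖q - pb‖ := by
      rw [← dist_eq_norm, ← dist_eq_norm, Prod.dist_eq, Prod.dist_eq]
      refine max_le_max le_rfl ?_
      rw [Prod.dist_eq]
      exact le_max_left _ _
    have hq'n : ‖q' - (pb.1, pb.2.1)‖ ≤ (1 + K) * ‖q - pb‖ := by
      have heq : q' - (pb.1, pb.2.1) =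
          (((q.1, q.2.1) : (∀ k, EuclideanSpace ℝ (Fin (m k))) ×
            (∀ j, EuclideanSpace ℝ (Fin (n j)))) - (pb.1, pb.2.1))
            + P.shiftMap pb.2.2 (z, q.2.2) := by
        rw [hq'def]; abel
      rw [heq]
      calc ‖_ + _‖ ≤ ‖((q.1, q.2.1) : (∀ k, EuclideanSpace ℝ (Fin (m k))) ×
            (∀ j, EuclideanSpace ℝ (Fin (n j)))) - (pb.1, pb.2.1)‖
            + ‖P.shiftMap pb.2.2 (z, q.2.2)‖ := norm_add_le _ _
        _ ≤ ‖q - pb‖ + K * ‖q - pb‖ := add_le_add hproj hshiftbound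
        _ = (1 + K) * ‖q - pb‖ := by ring
    calc ‖z - (xb, lb)‖ ≤ κ * ‖q' - (pb.1, pb.2.1)‖ := h1
      _ ≤ κ * ((1 + K) * ‖q - pb‖) := mul_le_mul_of_nonneg_left hq'n hκ
      _ = κ * (1 + K) * ‖q - pb‖ := by ring
end
end

section
/- Let N ≥ 1 and n_1,...,n_N be positive integers. For k,i ∈ {1,...,N} let Q_{ki} ∈ ℝ^{n_k × n_i} with each Q_{kk} symmetric, let M^k ⊆ ℝ^{n_k} be a nonzero linear subspace with basis matrix B^k, and set M = M^1 × ... × M^N. Suppose: (a) yᵀ Q_{kk} y > 0 for every 0 ≠ y ∈ M^k and every k; and (b) there exist parameters α_{i,j} > 0 (1 ≤ i,j ≤ N, j ≠ i) with Σ_{j≠i} α_{i,j} = 1 for each i, such that for every ordered pair of distinct indices (i,k) and every 0 ≠ y^k ∈ M^k, (y^k)ᵀ ( Q_{kk} − (1/(4 α_{i,k} α_{k,i})) A_{ik}ᵀ B^i ((B^i)ᵀ Q_{ii} B^i)^{−1} (B^i)ᵀ A_{ik} ) y^k > 0, where A_{ki} := Q_{ki} + Q_{ik}ᵀ. Then for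 every 0 ≠ y = (y^1,...,y^N) ∈ M, Σ_{k=1}^N Σ_{i=1}^N (y^k)ᵀ Q_{ki} y^i > 0. -/
open scoped InnerProductSpace

noncomputable section

lemma myIsUnit {E : Type*} [NormedAddCommGroup E] [InnerProductSpace ℝ E]
    [FiniteDimensional ℝ E] (G : E →L[ℝ] E) (hinj : Function.Injective G) :
    IsUnit G := by
  have hker : LinearMap.ker (G : E →ₗ[ℝ] E) = ⊥ := (LinearMap.ker_eq_bot (f := G.toLinearMap)).mpr hinj
  have hsurj : Function.Surjective G :=
    (LinearMap.injective_iff_surjective (f := G.toLinearMap)).mp hinj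
  have hrange : LinearMap.range (G : E →ₗ[ℝ] E) = ⊤ := (LinearMap.range_eq_top (f := G.toLinearMap)).mpr hsurj
  let e := ContinuousLinearEquiv.ofBijective G hker hrange
  refine ⟨⟨G, e.symm.toContinuousLinearMap, ?_, ?_⟩, rfl⟩
  · ext x; simp [ContinuousLinearMap.mul_apply]
    exact e.apply_symm_apply x
  · ext x; simp [ContinuousLinearMap.mul_apply]
    exact e.symm_apply_apply x
lemma aux_sq {E : Type*} [NormedAddCommGroup E] [InnerProductSpace ℝ E] [FiniteDimensional ℝ E]
    (G : E →L[ℝ] E) (hG : ContinuousLinearMap.adjoint G = G) (hGpos : ∀ v, 0 ≤ ⟪v, G v⟫_ℝ)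
    (hGunit : IsUnit G) (a : ℝ) (ha : 0 < a) (u b : E) :
    -(1/(4*a)) * ⟪b, Ring.inverse G b⟫_ℝ ≤ a * ⟪u, G u⟫_ℝ + ⟪u, b⟫_ℝ := by
  set G' := Ring.inverse G with hG'
  have h1 : G (G' b) = b := by
    have := Ring.mul_inverse_cancel G hGunit
    calc G (G' b) = (G * G') b := (ContinuousLinearMap.mul_apply _ _ _).symm
    _ = b := by rw [this]; rfl
  set w := u + (1/(2*a)) • G' b with hw
  have h0 := hGpos w
  have hexp : ⟪w, G w⟫_ℝ = ⟪u, G u⟫_ℝ + (1/a) * ⟪u, b⟫_ℝ + (1/(4*a^2)) * ⟪b, G' b⟫_ℝ := by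
    have e1 : ⟪u, G ((1/(2*a)) • G' b)⟫_ℝ = (1/(2*a)) * ⟪u, b⟫_ℝ := by
      rw [map_smul, real_inner_smul_right, h1]
    have e2 : ⟪(1/(2*a)) • G' b, G u⟫_ℝ = (1/(2*a)) * ⟪u, b⟫_ℝ := by
      rw [real_inner_smul_left]
      congr 1
      rw [← hG, ContinuousLinearMap.adjoint_inner_right, h1, real_inner_comm]
    have e3 : ⟪(1/(2*a)) • G' b, G ((1/(2*a)) • G' b)⟫_ℝ = (1/(2*a))^2 * ⟪b, G' b⟫_ℝ := by
      rw [map_smul, real_inner_smul_left, real_inner_smul_right, h1, real_inner_comm]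
      ring
    rw [hw, map_add, inner_add_left, inner_add_right, inner_add_right, e1, e2, e3]
    field_simp
    ring
  rw [hexp] at h0
  have ha' : a ≠ 0 := ne_of_gt ha
  have h2 := mul_nonneg ha.le h0
  have key : a * (⟪u, G u⟫_ℝ + (1/a) * ⟪u, b⟫_ℝ + (1/(4*a^2)) * ⟪b, G' b⟫_ℝ)
      = a * ⟪u, G u⟫_ℝ + ⟪u, b⟫_ℝ + (1/(4*a)) * ⟪b, G' b⟫_ℝ := by
    field_simp
  linarith [key ▸ h2]

lemma sum_rearrange {N : ℕ} (e : Fin N → Fin N → ℝ) (q : Fin N → ℝ) (α : Fin N → Fin N → ℝ)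
    (hq : ∀ i, e i i = q i) (hαsum : ∀ i, ∑ j ∈ Finset.univ.erase i, α i j = 1) :
    ∑ i, ∑ k ∈ Finset.univ.erase i, (α i k * q i + (e i k + e k i) + α k i * q k)
      = 2 * ∑ k, ∑ i, e k i := by
  have hswap : ∀ f : Fin N → Fin N → ℝ,
      ∑ i, ∑ k ∈ Finset.univ.erase i, f i k = ∑ k, ∑ i ∈ Finset.univ.erase k, f i k := by
    intro f
    refine Finset.sum_comm' ?_
    intro x y
    simp only [Finset.mem_univ, Finset.mem_erase, true_and, and_true, ne_comm]
  have hsplit : ∀ f : Fin N → Fin N → ℝ,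
      ∑ k, ∑ i, f k i = ∑ k, f k k + ∑ k, ∑ i ∈ Finset.univ.erase k, f k i := by
    intro f
    rw [← Finset.sum_add_distrib]
    refine Finset.sum_congr rfl fun k _ => ?_
    exact (Finset.add_sum_erase _ (f k) (Finset.mem_univ k)).symm
  have T1 : ∑ i, ∑ k ∈ Finset.univ.erase i, α i k * q i = ∑ i, q i := by
    refine Finset.sum_congr rfl fun i _ => ?_
    rw [← Finset.sum_mul, hαsum i, one_mul]
  have T2 : ∑ i, ∑ k ∈ Finset.univ.erase i, α k i * q k = ∑ i, q i := by
    rw [hswap]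
    refine Finset.sum_congr rfl fun k _ => ?_
    rw [← Finset.sum_mul, hαsum k, one_mul]
  have T3 : ∑ i, ∑ k ∈ Finset.univ.erase i, (e i k + e k i)
      = 2 * ∑ i, ∑ k ∈ Finset.univ.erase i, e i k := by
    have := hswap (fun i k => e k i)
    simp only [Finset.sum_add_distrib]
    rw [this]
    ring
  calc ∑ i, ∑ k ∈ Finset.univ.erase i, (α i k * q i + (e i k + e k i) + α k i * q k)
      = (∑ i, ∑ k ∈ Finset.univ.erase i, α i k * q i)
        + (∑ i, ∑ k ∈ Finset.univ.erase i, (e i k + e k i))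
        + (∑ i, ∑ k ∈ Finset.univ.erase i, α k i * q k) := by
        simp only [Finset.sum_add_distrib]
    _ = 2 * ∑ k, ∑ i, e k i := by
        rw [T1, T2, T3, hsplit e]
        have : ∑ k, e k k = ∑ k, q k := Finset.sum_congr rfl fun k _ => hq k
        rw [this]; ring


set_option maxHeartbeats 1000000 in
/-- The key quadratic-form estimate from the proof of Theorem 3.2 (sufficient condition
for strong regularity of the KKT mapping of a Nash equilibrium problem): positive
definiteness of each diagonal block `Q_{kk}` on `M^k` together with condition (α)
implies that the full block quadratic form is positive definite on `M = M^1 × ⋯ × M^N`. -/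
theorem stmt15 (N : ℕ) (hN : 1 ≤ N) (n : Fin N → ℕ)
    (Q : ∀ k i : Fin N, EuclideanSpace ℝ (Fin (n i)) →L[ℝ] EuclideanSpace ℝ (Fin (n k)))
    (hQsymm : ∀ k, (Q k k).adjoint = Q k k)
    (M : ∀ k, Submodule ℝ (EuclideanSpace ℝ (Fin (n k))))
    (hM : ∀ k, M k ≠ ⊥)
    (c : Fin N → ℕ)
    (hc : ∀ k, c k = Module.finrank ℝ (M k))
    (B : ∀ k, EuclideanSpace ℝ (Fin (c k)) →L[ℝ] EuclideanSpace ℝ (Fin (n k)))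
    (hBinj : ∀ k, Function.Injective (B k))
    (hBrange : ∀ k, Set.range (B k) = (M k : Set (EuclideanSpace ℝ (Fin (n k)))))
    (hpos : ∀ k, ∀ y ∈ M k, y ≠ 0 → 0 < ⟪y, Q k k y⟫_ℝ)
    (α : Fin N → Fin N → ℝ)
    (hαpos : ∀ i j, i ≠ j → 0 < α i j)
    (hαsum : ∀ i, ∑ j ∈ Finset.univ.erase i, α i j = 1)
    (hcond : ∀ i k : Fin N, i ≠ k → ∀ y ∈ M k, y ≠ 0 →
      0 < ⟪y, (Q k k - (1 / (4 * α i k * α k i)) •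
        (((Q i k + (Q k i).adjoint).adjoint).comp ((B i).comp
          ((Ring.inverse (((B i).adjoint).comp ((Q i i).comp (B i)))).comp
            (((B i).adjoint).comp (Q i k + (Q k i).adjoint)))))) y⟫_ℝ) :
    ∀ y : ∀ k, EuclideanSpace ℝ (Fin (n k)), (∀ k, y k ∈ M k) → y ≠ 0 →
      0 < ∑ k, ∑ i, ⟪y k, Q k i (y i)⟫_ℝ := by
  intro y hyM hy0
  -- per-index facts
  set q : Fin N → ℝ := fun i => ⟪y i, Q i i (y i)⟫_ℝ with hqdef
  have hq0 : ∀ j, 0 ≤ q j := by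
    intro j
    by_cases h : y j = 0
    · simp [hqdef, h]
    · exact (hpos j (y j) (hyM j) h).le
  -- Setup per pair
  have key_pos : ∀ i k : Fin N, i ≠ k → y k ≠ 0 →
      0 < α i k * q i + (⟪y i, Q i k (y k)⟫_ℝ + ⟪y k, Q k i (y i)⟫_ℝ) + α k i * q k := by
    intro i k hik hk0
    set A : EuclideanSpace ℝ (Fin (n k)) →L[ℝ] EuclideanSpace ℝ (Fin (n i)) :=
      Q i k + (Q k i).adjoint with hA
    set G : EuclideanSpace ℝ (Fin (c i)) →L[ℝ] EuclideanSpace ℝ (Fin (c i)) :=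
      ((B i).adjoint).comp ((Q i i).comp (B i)) with hGdef
    set b : EuclideanSpace ℝ (Fin (c i)) := (B i).adjoint (A (y k)) with hb
    have hGquad : ∀ v, ⟪v, G v⟫_ℝ = ⟪B i v, Q i i (B i v)⟫_ℝ := by
      intro v
      rw [hGdef]
      simp only [ContinuousLinearMap.comp_apply]
      rw [ContinuousLinearMap.adjoint_inner_right]
    have hBmem : ∀ v, B i v ∈ M i := by
      intro v
      have : B i v ∈ Set.range (B i) := ⟨v, rfl⟩
      rwa [hBrange i] at this
    have hGpos : ∀ v, 0 ≤ ⟪v, G v⟫_ℝ := by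
      intro v
      rw [hGquad]
      by_cases h : B i v = 0
      · simp [h]
      · exact (hpos i (B i v) (hBmem v) h).le
    have hGposd : ∀ v, v ≠ 0 → 0 < ⟪v, G v⟫_ℝ := by
      intro v hv
      rw [hGquad]
      have hBv : B i v ≠ 0 := by
        intro h
        exact hv (hBinj i (h.trans (map_zero (B i)).symm))
      exact hpos i (B i v) (hBmem v) hBv
    have hGinj : Function.Injective G := by
      intro v1 v2 h
      by_contra hne
      have hv : v1 - v2 ≠ 0 := sub_ne_zero.mpr hne
      have hGv : G (v1 - v2) = 0 := by rw [map_sub, h, sub_self]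
      have := hGposd (v1 - v2) hv
      rw [hGv, inner_zero_right] at this
      exact lt_irrefl 0 this
    have hGunit : IsUnit G := myIsUnit G hGinj
    have hGadj : ContinuousLinearMap.adjoint G = G := by
      rw [hGdef, ContinuousLinearMap.adjoint_comp, ContinuousLinearMap.adjoint_comp,
        ContinuousLinearMap.adjoint_adjoint, hQsymm i, ContinuousLinearMap.comp_assoc]
    obtain ⟨u, hu⟩ : ∃ u, B i u = y i := by
      have : y i ∈ Set.range (B i) := by rw [hBrange i]; exact hyM i
      exact this
    -- cross term
    have hcross : ⟪y i, Q i k (y k)⟫_ℝ + ⟪y k, Q k i (y i)⟫_ℝ = ⟪u, b⟫_ℝ := by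
      have h1 : ⟪y i, A (y k)⟫_ℝ = ⟪y i, Q i k (y k)⟫_ℝ + ⟪y k, Q k i (y i)⟫_ℝ := by
        rw [hA]
        simp only [ContinuousLinearMap.add_apply]
        rw [inner_add_right, ContinuousLinearMap.adjoint_inner_right, real_inner_comm (Q k i (y i))]
      rw [← h1, ← hu, hb, ContinuousLinearMap.adjoint_inner_right]
    have hdiag : q i = ⟪u, G u⟫_ℝ := by rw [hGquad, hu]
    -- completion of square
    have haux := aux_sq G hGadj hGpos hGunit (α i k) (hαpos i k hik) u b
    -- the condition
    have hcnd := hcond i k hik (y k) (hyM k) hk0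
    have hcnd' : 0 < q k - (1 / (4 * α i k * α k i)) * ⟪b, Ring.inverse G b⟫_ℝ := by
      have heval : ⟪y k, (Q k k - (1 / (4 * α i k * α k i)) •
          ((A.adjoint).comp ((B i).comp
            ((Ring.inverse G).comp (((B i).adjoint).comp A))))) (y k)⟫_ℝ
          = q k - (1 / (4 * α i k * α k i)) * ⟪b, Ring.inverse G b⟫_ℝ := by
        simp only [ContinuousLinearMap.sub_apply, ContinuousLinearMap.smul_apply,
          ContinuousLinearMap.comp_apply]
        rw [inner_sub_right, real_inner_smul_right]
        congr 2
        rw [ContinuousLinearMap.adjoint_inner_right,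
          ← ContinuousLinearMap.adjoint_inner_left (B i), hb]
      rw [← heval]
      exact hcnd
    have hα1 : 0 < α i k := hαpos i k hik
    have hα2 : 0 < α k i := hαpos k i hik.symm
    obtain ⟨r, hr⟩ : ∃ r, ⟪b, Ring.inverse G b⟫_ℝ = r := ⟨_, rfl⟩
    rw [hr] at haux hcnd'
    have hfact : ∀ X : ℝ, α k i * ((1 / (4 * α i k * α k i)) * X)
        = (1/(4 * α i k)) * X := by
      intro X; field_simp
    have h2 : (1/(4 * α i k)) * r < α k i * q k := by
      have h3 := mul_pos hα2 hcnd'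
      rw [mul_sub, hfact] at h3
      linarith
    rw [hcross, hdiag]
    linarith
  have key_nonneg : ∀ i k : Fin N, i ≠ k →
      0 ≤ α i k * q i + (⟪y i, Q i k (y k)⟫_ℝ + ⟪y k, Q k i (y i)⟫_ℝ) + α k i * q k := by
    intro i k hik
    by_cases hk0 : y k = 0
    · simp only [hk0, map_zero, inner_zero_right, inner_zero_left, add_zero]
      have : q k = 0 := by simp [hqdef, hk0]
      rw [this, mul_zero, add_zero]
      exact mul_nonneg (hαpos i k hik).le (hq0 i)
    · exact (key_pos i k hik hk0).le
  -- find nonzero index and partner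
  obtain ⟨k0, hk0⟩ : ∃ k0, y k0 ≠ 0 := by
    by_contra h
    push_neg at h
    exact hy0 (funext fun k => h k)
  have hne : (Finset.univ.erase k0).Nonempty := by
    rcases Finset.eq_empty_or_nonempty (Finset.univ.erase k0) with h | h
    · have := hαsum k0; rw [h, Finset.sum_empty] at this; norm_num at this
    · exact h
  obtain ⟨i0, hi0⟩ := hne
  have hik0 : i0 ≠ k0 := (Finset.mem_erase.mp hi0).1
  -- positivity of the rearranged sum
  have hsumpos : 0 < ∑ i, ∑ k ∈ Finset.univ.erase i,
      (α i k * q i + (⟪y i, Q i k (y k)⟫_ℝ + ⟪y k, Q k i (y i)⟫_ℝ) + α k i * q k) := by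
    refine Finset.sum_pos' (fun i _ => Finset.sum_nonneg fun k hk =>
      key_nonneg i k (Finset.mem_erase.mp hk).1.symm) ⟨i0, Finset.mem_univ i0, ?_⟩
    refine Finset.sum_pos' (fun k hk => key_nonneg i0 k (Finset.mem_erase.mp hk).1.symm)
      ⟨k0, ?_, key_pos i0 k0 hik0 hk0⟩
    exact Finset.mem_erase.mpr ⟨hik0.symm, Finset.mem_univ k0⟩
  have hre := sum_rearrange (fun i k => ⟪y i, Q i k (y k)⟫_ℝ) q α (fun i => rfl) hαsum
  rw [hre] at hsumpos
  linarith
end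
end

section
/- Suppose the NEP satisfies the convex assumptions and (x̄,λ̄) ∈ S_KKT(p̄). If the NEP satisfies the P-property at (p̄,x̄,λ̄) on K(I_1,I_2), then the NEP satisfies the I-property at (p̄,x̄,λ̄) on K(I_1,I_2). -/
open Function Set
open scoped InnerProductSpace

noncomputable section

open NEPStability


section Helpers

open InnerProductSpace

/-- A monotone real function has nonnegative derivative. -/
lemma monotone_hasDerivAt_nonneg {h : ℝ → ℝ} {D : ℝ} (hm : Monotone h)
    (hD : HasDerivAt h D 0) : 0 ≤ D := by
  rw [hasDerivAt_iff_tendsto_slope] at hD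
  refine ge_of_tendsto hD ?_
  filter_upwards [self_mem_nhdsWithin] with t ht
  have ht' : t ≠ 0 := by simpa using ht
  rcases ht'.lt_or_gt with h1 | h1
  · rw [slope_def_field]
    apply div_nonneg_iff.mpr
    exact Or.inr ⟨sub_nonpos.2 (hm h1.le), by linarith⟩
  · rw [slope_def_field]
    exact div_nonneg (sub_nonneg.2 (hm h1.le)) (by linarith)

variable {E : Type*} [NormedAddCommGroup E] [InnerProductSpace ℝ E] [CompleteSpace E]

/-- The Hessian of a `C²` convex function is positive semidefinite. -/
lemma convex_hessian_nonneg {φ : E → ℝ} (hφ : ContDiff ℝ 2 φ)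
    (hc : ConvexOn ℝ Set.univ φ) (x y : E) :
    0 ≤ ⟪y, fderiv ℝ (gradient φ) x y⟫_ℝ := by
  have hd : Differentiable ℝ φ := hφ.differentiable (by norm_num)
  set c : ℝ → E := fun t => x + t • y with hc_def
  have hcd : ∀ t : ℝ, HasDerivAt c y t := fun t => by
    simpa [hc_def] using ((hasDerivAt_id t).smul_const y).const_add x
  have hψd : ∀ t : ℝ, HasDerivAt (fun t => φ (c t)) (fderiv ℝ φ (c t) y) t := fun t =>
    (hd (c t)).hasFDerivAt.comp_hasDerivAt t (hcd t)
  have hψc : ConvexOn ℝ Set.univ (fun t => φ (c t)) := by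
    refine ⟨convex_univ, fun s _ t _ a b ha hb hab => ?_⟩
    have h2 := hc.2 (Set.mem_univ (c s)) (Set.mem_univ (c t)) ha hb hab
    have hcs : c (a * s + b * t) = a • c s + b • c t := by
      have hrhs : a • c s + b • c t = (a + b) • x + (a * s + b * t) • y := by
        simp only [hc_def, smul_add, smul_smul, add_smul]
        abel
      rw [hrhs, hab, one_smul]
    simpa [hcs] using h2
  have hmono : Monotone (fun t => fderiv ℝ φ (c t) y) := by
    have hm := hψc.monotoneOn_deriv (fun t _ => (hψd t).differentiableAt)
    intro s t hst
    have h3 := hm (Set.mem_univ s) (Set.mem_univ t) hst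
    rwa [(hψd s).deriv, (hψd t).deriv] at h3
  have hf1 : ContDiff ℝ 1 (fderiv ℝ φ) := hφ.fderiv_right (by norm_num)
  have hf1d : HasFDerivAt (fderiv ℝ φ) (fderiv ℝ (fderiv ℝ φ) x) x :=
    ((hf1.differentiable (by norm_num)) x).hasFDerivAt
  have hD : HasDerivAt (fun t => fderiv ℝ φ (c t) y)
      (fderiv ℝ (fderiv ℝ φ) x y y) 0 := by
    have h1 : HasDerivAt (fun t => fderiv ℝ φ (c t)) (fderiv ℝ (fderiv ℝ φ) x y) 0 := by
      have h0 : c 0 = x := by simp [hc_def]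
      have hf1d' : HasFDerivAt (fderiv ℝ φ) (fderiv ℝ (fderiv ℝ φ) x) (c 0) := by
        rw [h0]; exact hf1d
      have := hf1d'.comp_hasDerivAt 0 (hcd 0)
      simpa [Function.comp_def] using this
    have := (ContinuousLinearMap.apply ℝ ℝ y).hasFDerivAt.comp_hasDerivAt 0 h1
    simpa [Function.comp_def] using this
  have hnn : 0 ≤ fderiv ℝ (fderiv ℝ φ) x y y := monotone_hasDerivAt_nonneg hmono hD
  let T : StrongDual ℝ E →L[ℝ] E :=
    LinearMap.mkContinuous
      { toFun := fun L => (InnerProductSpace.toDual ℝ E).symm L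
        map_add' := fun L₁ L₂ => by simp
        map_smul' := fun r L => by
          simp [LinearIsometryEquiv.map_smulₛₗ, starRingEnd_apply, star_trivial] }
      1 (fun L => by simp)
  have hgradAt : HasFDerivAt (gradient φ) (T.comp (fderiv ℝ (fderiv ℝ φ) x)) x :=
    T.hasFDerivAt.comp x hf1d
  have hgrad : fderiv ℝ (gradient φ) x y = T (fderiv ℝ (fderiv ℝ φ) x y) := by
    rw [hgradAt.fderiv]; rfl
  rw [hgrad, real_inner_comm]
  have hTy : ⟪T (fderiv ℝ (fderiv ℝ φ) x y), y⟫_ℝ = fderiv ℝ (fderiv ℝ φ) x y y :=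
    InnerProductSpace.toDual_symm_apply
  rw [hTy]
  exact hnn

/-- An affine scalar function is convex. -/
lemma convexOn_affine' {E' : Type*} [NormedAddCommGroup E'] [NormedSpace ℝ E']
    (L : E' →L[ℝ] ℝ) (a c : ℝ) : ConvexOn ℝ Set.univ (fun y => a * (L y + c)) := by
  refine ⟨convex_univ, fun u _ v _ α β hα hβ hab => ?_⟩
  have h2 : a * (L (α • u + β • v) + c) = α * (a * (L u + c)) + β * (a * (L v + c)) := by
    have hL : L (α • u + β • v) = α * L u + β * L v := by
      simp [map_add, map_smul]
    rw [hL]; linear_combination (-(a * c)) * hab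
  simpa [smul_eq_mul] using le_of_eq h2

/-- A finite sum of convex functions is convex. -/
lemma convexOn_finset_sum' {ι E' : Type*} [NormedAddCommGroup E'] [NormedSpace ℝ E']
    (s : Finset ι) (F : ι → E' → ℝ) (h : ∀ i ∈ s, ConvexOn ℝ Set.univ (F i)) :
    ConvexOn ℝ Set.univ (fun y => ∑ i ∈ s, F i y) := by
  classical
  induction s using Finset.induction_on with
  | empty => simpa using convexOn_const (0 : ℝ) convex_univ
  | @insert a s hni ih =>
    have h1 := (h a (Finset.mem_insert_self a s)).add
      (ih fun i hi => h i (Finset.mem_insert_of_mem hi))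
    have : (fun y => ∑ i ∈ insert a s, F i y)
        = (F a + fun y => ∑ i ∈ s, F i y) := by
      funext y; simp [Finset.sum_insert hni]
    rw [this]; exact h1

end Helpers

/-- Remark 5.1 i): under the convex assumptions, the P-property implies the I-property. -/
theorem stmt16 {N : ℕ} {n m d : Fin N → ℕ} (P : NEPData N n m d)
    (hC2 : P.IsC2Data)
    (pb : (∀ k, EuclideanSpace ℝ (Fin (m k))) × (∀ j, EuclideanSpace ℝ (Fin (n j)))
      × (∀ k, EuclideanSpace ℝ (Fin (d k))))
    (xb : ∀ j, EuclideanSpace ℝ (Fin (n j))) (lb : ∀ k, EuclideanSpace ℝ (Fin (m k)))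
    (hsol : (xb, lb) ∈ P.SKKT pb)
    (hconv : P.ConvexAssumptions)
    (hP : P.PProperty pb xb lb) :
    P.IProperty pb xb lb := by
  intro y hy hsum
  by_contra hy0
  obtain ⟨k, hk⟩ := hP y hy hy0
  classical
  have hnn : 0 ≤ ⟪y k, P.hessLag k k xb (lb k) (pb.2.2 k) (y k)⟫_ℝ := by
    set Φ : EuclideanSpace ℝ (Fin (n k)) → ℝ :=
      fun z => P.f k (Function.update xb k z) (pb.2.2 k)
        + ∑ i, lb k i * P.g k i z (pb.2.2 k) with hPhi
    have hEq : (fun z => P.gradLag k (Function.update xb k z) (lb k) (pb.2.2 k))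
        = fun z => gradient Φ z := by
      funext z
      simp only [NEPData.gradLag, Function.update_idem, Function.update_self, hPhi]
    have hPhi2 : ContDiff ℝ 2 Φ := by
      rw [hPhi]
      apply ContDiff.add
      · exact (hC2.1 k).comp ((contDiff_update 2 xb k).prodMk contDiff_const)
      · apply ContDiff.sum
        intro i _
        exact contDiff_const.mul ((hC2.2 k i).comp (contDiff_id.prodMk contDiff_const))
    have hPhic : ConvexOn ℝ Set.univ Φ := by
      rw [hPhi]
      have h1 : ConvexOn ℝ Set.univ
          (fun z : EuclideanSpace ℝ (Fin (n k)) =>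
            P.f k (Function.update xb k z) (pb.2.2 k)) := hconv.1 k xb (pb.2.2 k)
      have h2 : ConvexOn ℝ Set.univ
          (fun z : EuclideanSpace ℝ (Fin (n k)) =>
            ∑ i, lb k i * P.g k i z (pb.2.2 k)) := by
        apply convexOn_finset_sum'
        intro i _
        by_cases hi : (i : ℕ) < P.s k
        · obtain ⟨L, c0, hg⟩ := hconv.2.1 k i hi (pb.2.2 k)
          have : (fun z : EuclideanSpace ℝ (Fin (n k)) => lb k i * P.g k i z (pb.2.2 k))
              = fun z => lb k i * (L z + c0) := by
            funext z; rw [hg]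
          rw [this]; exact convexOn_affine' L _ _
        · have hi' : P.s k ≤ (i : ℕ) := le_of_not_gt hi
          have h0 : 0 ≤ lb k i := ((hsol k).2.2 i hi').1
          have := (hconv.2.2 k i hi' (pb.2.2 k)).smul h0
          simpa [smul_eq_mul] using this
      have := h1.add h2
      exact this
    have hrw : P.hessLag k k xb (lb k) (pb.2.2 k) = fderiv ℝ (fun z => gradient Φ z) (xb k) := by
      rw [NEPData.hessLag, hEq]
    rw [hrw]
    have := convex_hessian_nonneg hPhi2 hPhic (xb k) (y k)
    simpa using this
  have hsk := hsum k
  have hsplit : (∑ i ∈ Finset.univ.erase k,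
        ⟪y k, P.hessLag k i xb (lb k) (pb.2.2 k) (y i)⟫_ℝ)
      + ⟪y k, P.hessLag k k xb (lb k) (pb.2.2 k) (y k)⟫_ℝ = 0 := by
    rw [Finset.sum_erase_add _ _ (Finset.mem_univ k)]
    exact hsk
  linarith
end
end
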